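/- arXiv:2305.07459 — 6 statements merged into one kernel-verified Lean document; each statement's English description precedes it below -/
import Mathlib

section
/- Let D ⊂ ℝ³ be a bounded domain, 0 ≤ t_min < t_max, K > 0, x̂ ∈ S², and L as the operator (Lu)(τ) = ∫_{t_min}^{t_max} ∫_D e^{−iτ(x̂·y − t)} u(y,t) dy dt from L²(D × (t_min, t_max)) to L²(0,K). Then L has dense range in L²(0,K). -/
open MeasureTheory Complex
open scoped RealInnerProductSpace

noncomputable section

/-- Points of `ℝ³`. -/
abbrev E3 := EuclideanSpace ℝ (Fin 3)

/-- The kernel `e^{-iτξ}`. -/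
def phase (τ ξ : ℝ) : ℂ := Complex.exp (-Complex.I * τ * ξ)

open Filter

lemma norm_cexp_I_mul (τ : ℝ) (z : ℂ) :
    ‖Complex.exp (Complex.I * τ * z)‖ = Real.exp (-(τ * z.im)) := by
  rw [Complex.norm_exp]
  congr 1
  have : Complex.I * τ * z = (τ : ℂ) * (Complex.I * z) := by ring
  rw [this]
  simp [Complex.mul_re]

lemma phase_norm (τ ξ : ℝ) : ‖phase τ ξ‖ = 1 := by
  rw [phase, Complex.norm_exp]
  have : (-Complex.I * τ * ξ).re = 0 := by
    have : -Complex.I * τ * ξ = -((τ * ξ : ℝ) : ℂ) * Complex.I := by push_cast; ring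
    rw [this]
    simp
  rw [this, Real.exp_zero]

lemma phase_conj (τ ξ : ℝ) :
    (starRingEnd ℂ) (phase τ ξ) = Complex.exp (Complex.I * τ * ξ) := by
  rw [phase, ← Complex.exp_conj]
  congr 1
  simp only [map_mul, map_neg, Complex.conj_I, Complex.conj_ofReal]
  ring

lemma Continuous.phase_comp {α : Type*} [TopologicalSpace α] {f g : α → ℝ}
    (hf : Continuous f) (hg : Continuous g) :
    Continuous fun x => phase (f x) (g x) := by
  unfold phase
  exact Complex.continuous_exp.comp
    ((continuous_const.mul (Complex.continuous_ofReal.comp hf)).mul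
      (Complex.continuous_ofReal.comp hg))

lemma kernel_integrable (Kb : ℝ) (hK : 0 < Kb) (φ0 : ℝ → ℂ)
    (hmeas : AEStronglyMeasurable φ0 (volume : Measure ℝ))
    (hint : Integrable φ0 (volume : Measure ℝ))
    (hsupp : ∀ τ, τ ∉ Set.Ioo 0 Kb → φ0 τ = 0) (z : ℂ) :
    Integrable (fun τ : ℝ => Complex.exp (Complex.I * τ * z) * φ0 τ) (volume : Measure ℝ) := by
  have hcont : Continuous fun τ : ℝ => Complex.exp (Complex.I * τ * z) :=
    Complex.continuous_exp.comp ((continuous_const.mul Complex.continuous_ofReal).mul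
      continuous_const)
  refine (hint.norm.const_mul (Real.exp (Kb * |z.im|))).mono'
    (hcont.aestronglyMeasurable.mul hmeas) (Filter.Eventually.of_forall fun τ => ?_)
  by_cases hτ : τ ∈ Set.Ioo 0 Kb
  · rw [norm_mul, norm_cexp_I_mul]
    gcongr
    calc -(τ * z.im) ≤ |τ * z.im| := neg_le_abs _
      _ = |τ| * |z.im| := abs_mul _ _
      _ ≤ Kb * |z.im| := by
        gcongr
        rw [abs_of_pos hτ.1]; exact hτ.2.le
  · rw [hsupp τ hτ]
    simp

lemma F_entire (Kb : ℝ) (hK : 0 < Kb) (φ0 : ℝ → ℂ)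
    (hmeas : AEStronglyMeasurable φ0 (volume : Measure ℝ))
    (hint : Integrable φ0 (volume : Measure ℝ))
    (hsupp : ∀ τ, τ ∉ Set.Ioo 0 Kb → φ0 τ = 0) :
    Differentiable ℂ (fun z : ℂ => ∫ τ : ℝ, Complex.exp (Complex.I * τ * z) * φ0 τ) := by
  intro z₀
  have key := hasDerivAt_integral_of_dominated_loc_of_deriv_le (μ := (volume : Measure ℝ))
    (x₀ := z₀) (F := fun z τ => Complex.exp (Complex.I * τ * z) * φ0 τ)
    (F' := fun z τ => (Complex.I * τ) * Complex.exp (Complex.I * τ * z) * φ0 τ)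
    (bound := fun τ => Kb * Real.exp (Kb * (|z₀.im| + 1)) * ‖φ0 τ‖) (Metric.ball_mem_nhds z₀ one_pos)
    ?_ ?_ ?_ ?_ ?_ ?_
  · exact key.2.differentiableAt
  · refine Filter.Eventually.of_forall fun z => ?_
    exact ((Complex.continuous_exp.comp ((continuous_const.mul Complex.continuous_ofReal).mul
      continuous_const)).aestronglyMeasurable).mul hmeas
  · exact kernel_integrable Kb hK φ0 hmeas hint hsupp z₀
  · refine (Continuous.aestronglyMeasurable ?_).mul hmeas
    exact (continuous_const.mul Complex.continuous_ofReal).mul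
      (Complex.continuous_exp.comp ((continuous_const.mul Complex.continuous_ofReal).mul
        continuous_const))
  · refine Filter.Eventually.of_forall fun τ x hx => ?_
    show ‖Complex.I * (τ:ℂ) * Complex.exp (Complex.I * τ * x) * φ0 τ‖ ≤ _
    by_cases hτ : τ ∈ Set.Ioo 0 Kb
    · have h1 : ‖Complex.I * (τ:ℂ) * Complex.exp (Complex.I * τ * x) * φ0 τ‖
          = |τ| * Real.exp (-(τ * x.im)) * ‖φ0 τ‖ := by
        rw [norm_mul, norm_mul, norm_cexp_I_mul]
        congr 2
        simp
      rw [h1]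
      have him : |x.im| ≤ |z₀.im| + 1 := by
        have h2 : |x.im - z₀.im| ≤ ‖x - z₀‖ := by
          simpa using Complex.abs_im_le_norm (x - z₀)
        have h3 : ‖x - z₀‖ < 1 := by
          rw [Metric.mem_ball] at hx
          simpa [Complex.dist_eq] using hx
        have h4 : |x.im| - |z₀.im| ≤ |x.im - z₀.im| := abs_sub_abs_le_abs_sub _ _
        linarith
      have hτKb : |τ| ≤ Kb := by rw [abs_of_pos hτ.1]; exact hτ.2.le
      have h2 : -(τ * x.im) ≤ Kb * (|z₀.im| + 1) := by
        calc -(τ * x.im) ≤ |τ * x.im| := neg_le_abs _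
          _ = |τ| * |x.im| := abs_mul _ _
          _ ≤ Kb * (|z₀.im| + 1) := mul_le_mul hτKb him (abs_nonneg _) hK.le
      refine mul_le_mul_of_nonneg_right ?_ (norm_nonneg _)
      exact mul_le_mul hτKb (Real.exp_le_exp.2 h2) (Real.exp_pos _).le hK.le
    · rw [hsupp τ hτ]
      simp
  · exact hint.norm.const_mul _
  · refine Filter.Eventually.of_forall fun τ x hx => ?_
    have h1 : HasDerivAt (fun y : ℂ => Complex.I * τ * y) (Complex.I * τ) x := by
      simpa using (hasDerivAt_id x).const_mul (Complex.I * (τ:ℂ))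
    have h2 := (h1.cexp).mul_const (φ0 τ)
    exact h2.congr_deriv (by ring)

lemma zero_of_zero_on_interval {F : ℂ → ℂ} (hF : Differentiable ℂ F) {a b : ℝ} (hab : a < b)
    (h0 : ∀ x : ℝ, x ∈ Set.Ioo a b → F x = 0) : ∀ z : ℂ, F z = 0 := by
  have hA : AnalyticOnNhd ℂ F Set.univ :=
    hF.differentiableOn.analyticOnNhd isOpen_univ
  set c : ℝ := (a + b) / 2 with hc
  set d : ℝ := (b - a) / 2 with hd
  have hdpos : 0 < d := by simp only [hd]; linarith
  have key : ∃ᶠ z in nhdsWithin (c : ℂ) {(c : ℂ)}ᶜ, F z = 0 := by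
    have tendR : Tendsto (fun n : ℕ => c + d / (n + 2)) atTop (nhds c) := by
      have h1 : Tendsto (fun n : ℕ => ((n : ℝ) + 2)) atTop atTop :=
        tendsto_atTop_add_const_right _ 2 tendsto_natCast_atTop_atTop
      have h2 : Tendsto (fun n : ℕ => d / ((n : ℝ) + 2)) atTop (nhds 0) := by
        simpa [div_eq_mul_inv] using h1.inv_tendsto_atTop.const_mul d
      simpa using tendsto_const_nhds.add h2
    have tendC : Tendsto (fun n : ℕ => ((c + d / (n + 2) : ℝ) : ℂ)) atTop
        (nhdsWithin (c : ℂ) {(c : ℂ)}ᶜ) := by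
      apply tendsto_nhdsWithin_of_tendsto_nhds_of_eventually_within
      · exact (Complex.continuous_ofReal.tendsto c).comp tendR
      · refine Filter.Eventually.of_forall fun n => ?_
        simp only [Set.mem_compl_iff, Set.mem_singleton_iff]
        intro h
        rw [Complex.ofReal_inj] at h
        have hpos : 0 < d / ((n : ℝ) + 2) := by positivity
        linarith
    apply tendC.frequently
    apply Filter.Frequently.of_forall
    intro n
    apply h0
    have hpos : 0 < d / ((n : ℝ) + 2) := by positivity
    have hle : d / ((n : ℝ) + 2) ≤ d / 2 :=
      div_le_div_of_nonneg_left hdpos.le (by norm_num) (by norm_num)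
    constructor
    · simp only [hc, hd] at *; linarith
    · simp only [hc, hd] at *; linarith
  have := hA.eqOn_zero_of_preconnected_of_frequently_eq_zero isPreconnected_univ
    (Set.mem_univ (c : ℂ)) key
  exact fun z => this (Set.mem_univ z)

set_option maxHeartbeats 2000000 in
theorem stmt_5 (D : Set E3) (hDopen : IsOpen D) (hDne : D.Nonempty)
    (hDbdd : Bornology.IsBounded D)
    (tmin tmax Kb : ℝ) (htmin : 0 ≤ tmin) (ht : tmin < tmax) (hK : 0 < Kb)
    (xhat : E3) (hx : ‖xhat‖ = 1)
    (L : Lp ℂ 2 ((volume : Measure (E3 × ℝ)).restrict (D ×ˢ Set.Ioo tmin tmax)) →L[ℂ]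
         Lp ℂ 2 ((volume : Measure ℝ).restrict (Set.Ioo 0 Kb)))
    (hL : ∀ u, ∀ᵐ τ ∂((volume : Measure ℝ).restrict (Set.Ioo 0 Kb)),
      (L u : ℝ → ℂ) τ =
        ∫ p in D ×ˢ Set.Ioo tmin tmax, phase τ (⟪xhat, p.1⟫ - p.2) * (u : E3 × ℝ → ℂ) p) :
    DenseRange L := by
  classical
  haveI : Fact (0 < Kb) := ⟨hK⟩
  haveI hfinK : IsFiniteMeasure ((volume : Measure ℝ).restrict (Set.Ioo 0 Kb)) := by
    constructor
    rw [Measure.restrict_apply_univ]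
    exact measure_Ioo_lt_top
  suffices hbot : ∀ φ : Lp ℂ 2 ((volume : Measure ℝ).restrict (Set.Ioo 0 Kb)),
      (∀ u, inner (𝕜 := ℂ) (L u) φ = 0) → φ = 0 by
    have h1 : (LinearMap.range L.toLinearMap)ᗮ = ⊥ := by
      rw [Submodule.eq_bot_iff]
      intro φ hφ
      exact hbot φ fun u =>
        (Submodule.mem_orthogonal _ φ).1 hφ (L u) (LinearMap.mem_range_self _ u)
    have h2 : (LinearMap.range L.toLinearMap).topologicalClosure = ⊤ :=
      Submodule.topologicalClosure_eq_top_iff.2 h1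
    have h3 : Dense ((LinearMap.range L.toLinearMap : Submodule ℂ _) : Set (Lp ℂ 2 ((volume : Measure ℝ).restrict (Set.Ioo 0 Kb)))) :=
      Submodule.dense_iff_topologicalClosure_eq_top.2 h2
    rw [LinearMap.coe_range] at h3; exact h3
  intro φ hOrth
  have hmeasS : MeasurableSet (D ×ˢ Set.Ioo tmin tmax) := hDopen.measurableSet.prod measurableSet_Ioo
  have hSopen : IsOpen (D ×ˢ Set.Ioo tmin tmax) := hDopen.prod isOpen_Ioo
  haveI hfinP : IsFiniteMeasure ((volume : Measure (E3 × ℝ)).restrict (D ×ˢ Set.Ioo tmin tmax)) := by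
    constructor
    rw [Measure.restrict_apply_univ]
    exact (hDbdd.prod (Metric.isBounded_Ioo tmin tmax)).measure_lt_top
  -- the zero extension of φ
  set φ0 : ℝ → ℂ := (Set.Ioo 0 Kb).indicator (⇑φ) with hφ0
  have hmemv : MemLp φ0 2 (volume : Measure ℝ) :=
    (memLp_indicator_iff_restrict measurableSet_Ioo).2 (Lp.memLp φ)
  have hmeas0 : AEStronglyMeasurable φ0 (volume : Measure ℝ) := hmemv.1
  have hφint : Integrable (⇑φ) ((volume : Measure ℝ).restrict (Set.Ioo 0 Kb)) :=
    (Lp.memLp φ).integrable one_le_two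
  have hint0 : Integrable φ0 (volume : Measure ℝ) :=
    (integrable_indicator_iff measurableSet_Ioo).2 hφint
  have hsupp : ∀ τ, τ ∉ Set.Ioo 0 Kb → φ0 τ = 0 := fun τ hτ =>
    Set.indicator_of_notMem hτ _
  -- the analytic function F
  set F : ℂ → ℂ := fun z => ∫ τ : ℝ, Complex.exp (Complex.I * τ * z) * φ0 τ with hF
  have hFd : Differentiable ℂ F := F_entire Kb hK φ0 hmeas0 hint0 hsupp
  have hFreal : ∀ ξ : ℝ, F ξ = ∫ τ in Set.Ioo 0 Kb,
      Complex.exp (Complex.I * τ * (ξ:ℂ)) * (⇑φ) τ := by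
    intro ξ
    rw [hF]
    simp only
    rw [← integral_indicator measurableSet_Ioo]
    refine integral_congr_ae (Filter.Eventually.of_forall fun τ => ?_)
    by_cases hτ : τ ∈ Set.Ioo 0 Kb
    · rw [hφ0]
      simp [Set.indicator_of_mem hτ]
    · rw [hφ0]
      simp [Set.indicator_of_notMem hτ]
  set hfun : E3 × ℝ → ℂ := fun p => F ((⟪xhat, p.1⟫ - p.2 : ℝ) : ℂ) with hhfun
  have hfuncont : Continuous hfun := by
    apply hFd.continuous.comp
    apply Complex.continuous_ofReal.comp
    exact (continuous_const.inner continuous_fst).sub continuous_snd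
  -- the key computation of the inner product
  have hcomp : ∀ u : Lp ℂ 2 ((volume : Measure (E3 × ℝ)).restrict (D ×ˢ Set.Ioo tmin tmax)),
      inner (𝕜 := ℂ) (L u) φ
        = ∫ p in (D ×ˢ Set.Ioo tmin tmax), (starRingEnd ℂ) ((u : E3 × ℝ → ℂ) p) * hfun p := by
    intro u
    have hu1 : Integrable (⇑u) ((volume : Measure (E3 × ℝ)).restrict (D ×ˢ Set.Ioo tmin tmax)) :=
      (Lp.memLp u).integrable one_le_two
    have huconj : Integrable (fun p => (starRingEnd ℂ) ((u : E3 × ℝ → ℂ) p))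
        ((volume : Measure (E3 × ℝ)).restrict (D ×ˢ Set.Ioo tmin tmax)) :=
      Integrable.mono' hu1.norm
        (Complex.continuous_conj.comp_aestronglyMeasurable (Lp.aestronglyMeasurable u))
        (Filter.Eventually.of_forall fun p => by simp)
    have hGint : Integrable (fun q : ℝ × (E3 × ℝ) =>
        (starRingEnd ℂ) (phase q.1 (⟪xhat, q.2.1⟫ - q.2.2))
          * ((⇑φ) q.1 * (starRingEnd ℂ) ((u : E3 × ℝ → ℂ) q.2)))
        (((volume : Measure ℝ).restrict (Set.Ioo 0 Kb)).prod
          ((volume : Measure (E3 × ℝ)).restrict (D ×ˢ Set.Ioo tmin tmax))) := by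
      refine Integrable.bdd_mul (c := 1) (hφint.mul_prod huconj) ?_ ?_
      · refine Continuous.aestronglyMeasurable ?_
        exact Complex.continuous_conj.comp (Continuous.phase_comp continuous_fst
          ((continuous_const.inner (continuous_fst.comp continuous_snd)).sub
            (continuous_snd.comp continuous_snd)))
      · exact Filter.Eventually.of_forall fun q => by
          rw [RCLike.norm_conj, phase_norm]
    calc inner (𝕜 := ℂ) (L u) φ
        = ∫ τ in Set.Ioo 0 Kb, (starRingEnd ℂ) ((L u : ℝ → ℂ) τ) * (⇑φ) τ := by
          rw [MeasureTheory.L2.inner_def]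
          refine integral_congr_ae (Filter.Eventually.of_forall fun τ => ?_)
          simp only [RCLike.inner_apply]
          exact mul_comm _ _
      _ = ∫ τ in Set.Ioo 0 Kb, ∫ p in (D ×ˢ Set.Ioo tmin tmax),
            (starRingEnd ℂ) (phase τ (⟪xhat, p.1⟫ - p.2))
              * ((⇑φ) τ * (starRingEnd ℂ) ((u : E3 × ℝ → ℂ) p)) := by
          apply integral_congr_ae
          filter_upwards [hL u] with τ hτ
          rw [hτ, ← integral_conj, ← integral_mul_const]
          refine integral_congr_ae (Filter.Eventually.of_forall fun p => ?_)
          simp only [map_mul]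
          ring
      _ = ∫ p in (D ×ˢ Set.Ioo tmin tmax), ∫ τ in Set.Ioo 0 Kb,
            (starRingEnd ℂ) (phase τ (⟪xhat, p.1⟫ - p.2))
              * ((⇑φ) τ * (starRingEnd ℂ) ((u : E3 × ℝ → ℂ) p)) :=
          integral_integral_swap hGint
      _ = ∫ p in (D ×ˢ Set.Ioo tmin tmax), (starRingEnd ℂ) ((u : E3 × ℝ → ℂ) p) * hfun p := by
          refine integral_congr_ae (Filter.Eventually.of_forall fun p => ?_)
          have e1 : ∀ τ : ℝ, (starRingEnd ℂ) (phase τ (⟪xhat, p.1⟫ - p.2))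
              * ((⇑φ) τ * (starRingEnd ℂ) ((u : E3 × ℝ → ℂ) p))
              = (starRingEnd ℂ) ((u : E3 × ℝ → ℂ) p)
              * (Complex.exp (Complex.I * τ * ((⟪xhat, p.1⟫ - p.2 : ℝ) : ℂ)) * (⇑φ) τ) := by
            intro τ
            rw [phase_conj]
            ring
          simp_rw [e1]
          rw [integral_const_mul, hhfun]
          simp only
          rw [hFreal]
  -- hfun is in L²
  have hSclosure : IsCompact (closure (D ×ˢ Set.Ioo tmin tmax)) :=
    (hDbdd.prod (Metric.isBounded_Ioo tmin tmax)).isCompact_closure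
  obtain ⟨Cb, hCb⟩ := hSclosure.exists_bound_of_continuousOn hfuncont.continuousOn
  have hmemP : MemLp hfun 2 ((volume : Measure (E3 × ℝ)).restrict (D ×ˢ Set.Ioo tmin tmax)) := by
    refine MemLp.of_bound hfuncont.aestronglyMeasurable Cb ?_
    filter_upwards [ae_restrict_mem hmeasS] with p hp
    exact hCb p (subset_closure hp)
  set u0 := hmemP.toLp hfun with hu0
  have hzero : ∫ p in (D ×ˢ Set.Ioo tmin tmax), (starRingEnd ℂ) (hfun p) * hfun p = 0 := by
    have h := hOrth u0
    rw [hcomp u0] at h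
    rw [← h]
    apply integral_congr_ae
    filter_upwards [hmemP.coeFn_toLp] with p hp
    rw [hu0, hp]
  -- hfun vanishes a.e. on (D ×ˢ Set.Ioo tmin tmax)
  have haez : ∀ᵐ p ∂((volume : Measure (E3 × ℝ)).restrict (D ×ˢ Set.Ioo tmin tmax)), hfun p = 0 := by
    have hnormint : Integrable (fun p => ‖hfun p‖ ^ 2)
        ((volume : Measure (E3 × ℝ)).restrict (D ×ˢ Set.Ioo tmin tmax)) := by
      refine memLp_one_iff_integrable.1 (MemLp.of_bound
        ((hfuncont.norm.pow 2).aestronglyMeasurable) (Cb ^ 2) ?_)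
      filter_upwards [ae_restrict_mem hmeasS] with p hp
      have h1 := hCb p (subset_closure hp)
      have h2 : (0:ℝ) ≤ ‖hfun p‖ := norm_nonneg _
      calc ‖‖hfun p‖ ^ 2‖ = ‖hfun p‖ ^ 2 := by
            rw [Real.norm_eq_abs]
            exact _root_.abs_of_nonneg (by positivity)
        _ ≤ Cb ^ 2 := by
            exact pow_le_pow_left₀ h2 h1 2
    have hre : ∫ p in (D ×ˢ Set.Ioo tmin tmax), ‖hfun p‖ ^ 2 = 0 := by
      have e1 : ∀ p : E3 × ℝ, (starRingEnd ℂ) (hfun p) * hfun p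
          = ((‖hfun p‖ ^ 2 : ℝ) : ℂ) := fun p => by
        rw [Complex.conj_mul']
        norm_cast
      have e2 : ∫ p in (D ×ˢ Set.Ioo tmin tmax), ((‖hfun p‖ ^ 2 : ℝ) : ℂ) = ((∫ p in (D ×ˢ Set.Ioo tmin tmax), ‖hfun p‖ ^ 2 : ℝ) : ℂ) :=
        integral_ofReal
      have e3 : ((∫ p in (D ×ˢ Set.Ioo tmin tmax), ‖hfun p‖ ^ 2 : ℝ) : ℂ) = 0 := by
        rw [← e2, ← integral_congr_ae (Filter.Eventually.of_forall fun p => e1 p)]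
        exact hzero
      exact_mod_cast e3
    have := (integral_eq_zero_iff_of_nonneg (fun p => by positivity) hnormint).1 hre
    filter_upwards [this] with p hp
    have : ‖hfun p‖ ^ 2 = 0 := hp
    have : ‖hfun p‖ = 0 := by
      nlinarith [norm_nonneg (hfun p)]
    exact norm_eq_zero.1 this
  -- hence hfun vanishes everywhere on (D ×ˢ Set.Ioo tmin tmax)
  have hzS : ∀ p ∈ (D ×ˢ Set.Ioo tmin tmax), hfun p = 0 := by
    intro p hp
    by_contra hne
    have hVopen : IsOpen ((D ×ˢ Set.Ioo tmin tmax) ∩ hfun ⁻¹' {0}ᶜ) :=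
      hSopen.inter (isOpen_compl_singleton.preimage hfuncont)
    have hpos : 0 < volume ((D ×ˢ Set.Ioo tmin tmax) ∩ hfun ⁻¹' {0}ᶜ) :=
      hVopen.measure_pos _ ⟨p, hp, hne⟩
    have hnull : (volume : Measure (E3 × ℝ)).restrict (D ×ˢ Set.Ioo tmin tmax) (hfun ⁻¹' {0}ᶜ) = 0 := by
      have := ae_iff.1 haez
      simpa [Set.preimage, Set.compl] using this
    rw [Measure.restrict_apply (hfuncont.measurable (measurableSet_singleton 0).compl)]
      at hnull
    rw [Set.inter_comm] at hnull
    exact absurd hnull hpos.ne'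
  -- F vanishes on an interval
  obtain ⟨y₀, hy₀⟩ := hDne
  set c : ℝ := ⟪xhat, y₀⟫ with hc
  have hFIoo : ∀ x : ℝ, x ∈ Set.Ioo (c - tmax) (c - tmin) → F x = 0 := by
    intro x hxmem
    have ht' : c - x ∈ Set.Ioo tmin tmax :=
      ⟨by linarith [hxmem.2], by linarith [hxmem.1]⟩
    have h5 := hzS (y₀, c - x) ⟨hy₀, ht'⟩
    rw [hhfun] at h5
    simp only at h5
    have harg : (⟪xhat, y₀⟫ - (c - x) : ℝ) = x := by rw [hc]; ring
    rw [harg] at h5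
    exact h5
  have hFall : ∀ z : ℂ, F z = 0 :=
    zero_of_zero_on_interval hFd (by linarith) hFIoo
  -- transfer to the additive circle and use the Fourier basis
  set ψ : ℝ → ℂ := hmeas0.mk φ0 with hψdef
  have hψm : StronglyMeasurable ψ := hmeas0.stronglyMeasurable_mk
  have hψae : φ0 =ᵐ[(volume : Measure ℝ)] ψ := hmeas0.ae_eq_mk
  set g : AddCircle Kb → ℂ := AddCircle.liftIoc Kb 0 ψ with hg
  have hgsm : StronglyMeasurable g := by
    apply hψm.comp_measurable
    exact measurable_subtype_coe.comp (AddCircle.measurableEquivIoc Kb 0).measurable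
  have hgmk_ae : g ∘ (fun x : ℝ => (x : AddCircle Kb))
      =ᵐ[(volume : Measure ℝ).restrict (Set.Ioc 0 (0 + Kb))] φ0 := by
    filter_upwards [ae_restrict_mem measurableSet_Ioc, ae_restrict_of_ae hψae] with x hx h2
    rw [Function.comp_apply, hg, AddCircle.liftIoc_coe_apply hx, ← h2]
  have hmem2 : MemLp g 2 (volume : Measure (AddCircle Kb)) := by
    rw [← (AddCircle.measurePreserving_mk Kb 0).map_eq]
    rw [memLp_map_measure_iff hgsm.aestronglyMeasurable
      AddCircle.measurable_mk'.aemeasurable]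
    exact MemLp.ae_eq hgmk_ae.symm (hmemv.restrict _)
  have hmemh : MemLp g 2 (AddCircle.haarAddCircle (T := Kb)) := by
    have hv : (AddCircle.haarAddCircle : Measure (AddCircle Kb))
        = (ENNReal.ofReal Kb)⁻¹ • (volume : Measure (AddCircle Kb)) := by
      rw [AddCircle.volume_eq_smul_haarAddCircle, ← smul_assoc]
      rw [smul_eq_mul, ENNReal.inv_mul_cancel
        (ENNReal.ofReal_pos.2 hK).ne' ENNReal.ofReal_ne_top, one_smul]
    rw [hv]
    exact hmem2.smul_measure (by simp [hK])
  have hcoeff : ∀ n : ℤ, fourierCoeff g n = 0 := by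
    intro n
    rw [hg, fourierCoeff_liftIoc_eq, fourierCoeffOn_eq_integral]
    have h0 : ∫ x in (0:ℝ)..(0 + Kb), fourier (-n) (x : AddCircle (0 + Kb - 0)) • ψ x = 0 := by
      rw [intervalIntegral.integral_of_le (by linarith)]
      have e1 : ∫ x in Set.Ioc (0:ℝ) (0 + Kb),
            fourier (-n) (x : AddCircle (0 + Kb - 0)) • ψ x
          = ∫ x in Set.Ioc (0:ℝ) (0 + Kb),
            Complex.exp (Complex.I * x * ((-2 * Real.pi * n / Kb : ℝ) : ℂ)) * φ0 x := by
        apply integral_congr_ae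
        filter_upwards [ae_restrict_of_ae hψae] with x hx
        rw [← hx, smul_eq_mul]
        congr 1
        rw [fourier_coe_apply]
        have hKb' : (Kb : ℂ) ≠ 0 := by
          exact_mod_cast hK.ne'
        congr 1
        push_cast
        field_simp
        rw [zero_add, sub_zero, mul_div_assoc, div_self hKb', mul_one]
      rw [e1]
      rw [setIntegral_eq_integral_of_forall_compl_eq_zero (fun x hx => ?_)]
      · exact hFall _
      · rw [hsupp x (fun hmem => hx ⟨hmem.1, by linarith [hmem.2]⟩), mul_zero]
    rw [h0, smul_zero]
  set f2 := hmemh.toLp g with hf2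
  have hcoe2 : ⇑f2 =ᵐ[(AddCircle.haarAddCircle (T := Kb))] g := by
    rw [hf2]
    exact hmemh.coeFn_toLp
  have hf2coeff : ∀ n : ℤ, fourierCoeff (⇑f2) n = 0 := by
    intro n
    rw [← hcoeff n]
    unfold fourierCoeff
    refine integral_congr_ae (hcoe2.mono fun t ht => ?_)
    dsimp only
    rw [ht]
  have hf2zero : f2 = 0 := by
    apply fourierBasis.repr.injective
    rw [map_zero, lp.ext_iff]
    funext n
    rw [fourierBasis_repr, hf2coeff n]
    simp
  have hg0 : g =ᵐ[(AddCircle.haarAddCircle (T := Kb))] 0 := by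
    have h1 := hmemh.coeFn_toLp
    rw [← hf2] at h1
    have h2 : ⇑f2 =ᵐ[(AddCircle.haarAddCircle (T := Kb))] 0 := by
      rw [hf2zero]
      exact Lp.coeFn_zero _ _ _
    exact h1.symm.trans h2
  have hg0v : g =ᵐ[(volume : Measure (AddCircle Kb))] 0 := by
    rw [AddCircle.volume_eq_smul_haarAddCircle]
    exact Measure.ae_smul_measure hg0 _
  have hpull : g ∘ (fun x : ℝ => (x : AddCircle Kb))
      =ᵐ[(volume : Measure ℝ).restrict (Set.Ioc 0 (0 + Kb))] 0 := by
    have := ae_eq_comp (μ := (volume : Measure ℝ).restrict (Set.Ioc 0 (0 + Kb)))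
      (f := fun x : ℝ => (x : AddCircle Kb)) (g := g) (g' := 0)
      AddCircle.measurable_mk'.aemeasurable ?_
    · exact this
    · rw [(AddCircle.measurePreserving_mk Kb 0).map_eq]
      exact hg0v
  have hφ00 : φ0 =ᵐ[(volume : Measure ℝ).restrict (Set.Ioc 0 (0 + Kb))] 0 :=
    hgmk_ae.symm.trans hpull
  have hφ0' : ⇑φ =ᵐ[(volume : Measure ℝ).restrict (Set.Ioo 0 Kb)] 0 := by
    have h1 : φ0 =ᵐ[(volume : Measure ℝ).restrict (Set.Ioo 0 Kb)] 0 :=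
      ae_restrict_of_ae_restrict_of_subset
        (fun x hx => by
          rcases Set.mem_Ioo.1 hx with ⟨ha, hb⟩
          exact Set.mem_Ioc.2 ⟨ha, by linarith⟩) hφ00
    filter_upwards [h1, ae_restrict_mem measurableSet_Ioo] with x hx1 hx2
    rw [← Set.indicator_of_mem hx2 (⇑φ)]
    exact hx1
  exact Lp.eq_zero_iff_ae_eq_zero.2 hφ0'

end
end

section
/- Let D ⊂ ℝ³ be bounded, 0 ≤ t_min < t_max, x̂ ∈ S², f ∈ L²(D × (t_min, t_max)), and define G(τ) = ∫_{t_min}^{t_max} ∫_D e^{−iτ(x̂·y − t)} f(y,t) dy dt for τ ∈ ℝ. Then the support of the inverse Fourier transform of G is contained in the interval [inf(x̂·D) − t_max, sup(x̂·D) − t_min]. -/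
open MeasureTheory Complex
open scoped RealInnerProductSpace
open Filter Real
open scoped Topology

noncomputable section

lemma aux_key (μ : Measure (E3 × ℝ)) [IsFiniteMeasure μ] (s : E3 × ℝ → ℝ) (hs : Continuous s)
    (f : E3 × ℝ → ℂ) (hfi : Integrable f μ) (ξ : ℝ) (ε : ℝ) (hε : 0 < ε) (G : ℝ → ℂ)
    (hG : ∀ τ : ℝ, G τ = ∫ p, Complex.exp (-Complex.I * τ * s p) * f p ∂μ) :
    ∫ τ : ℝ, G τ * Complex.exp (Complex.I * τ * ξ) * Complex.exp (-(ε : ℂ) * (τ : ℂ) ^ 2)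
      = ∫ p, ((Real.pi : ℂ) / ε) ^ (1/2 : ℂ) *
          Complex.exp (-((ξ - s p : ℝ) : ℂ) ^ 2 / (4 * ε)) * f p ∂μ := by
  set F : ℝ → (E3 × ℝ) → ℂ := fun τ p =>
    Complex.exp (Complex.I * ((ξ - s p : ℝ) : ℂ) * (τ : ℂ)) *
      Complex.exp (-(ε : ℂ) * (τ : ℂ) ^ 2) * f p with hF
  have hFint : Integrable (Function.uncurry F) ((volume : Measure ℝ).prod μ) := by
    have hmeas : AEStronglyMeasurable (Function.uncurry F) ((volume : Measure ℝ).prod μ) := by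
      apply AEStronglyMeasurable.mul
      apply AEStronglyMeasurable.mul
      · exact (Complex.continuous_exp.comp <|
          ((continuous_const.mul ((Complex.continuous_ofReal.comp
            ((continuous_const.sub hs).comp continuous_snd)))).mul
            (Complex.continuous_ofReal.comp continuous_fst))).aestronglyMeasurable
      · exact (Complex.continuous_exp.comp <|
          (continuous_const.mul ((Complex.continuous_ofReal.comp
            continuous_fst).pow 2))).aestronglyMeasurable
      · exact hfi.1.comp_snd
    refine ((integrable_exp_neg_mul_sq hε).mul_prod hfi.norm).mono' hmeas ?_
    refine Filter.Eventually.of_forall fun z => ?_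
    rcases z with ⟨τ, p⟩
    have h1 : ‖Complex.exp (Complex.I * ((ξ - s p : ℝ) : ℂ) * (τ : ℂ))‖ = 1 := by
      rw [Complex.norm_exp]
      simp [Complex.mul_re]
    have h2 : ‖Complex.exp (-(ε : ℂ) * (τ : ℂ) ^ 2)‖ = Real.exp (-ε * τ ^ 2) := by
      rw [← Complex.ofReal_pow, show -(ε:ℂ) * ((τ^2 : ℝ) : ℂ)
        = ((-ε * τ ^ 2 : ℝ) : ℂ) by push_cast; ring, Complex.norm_exp_ofReal]
    simp only [Function.uncurry, hF, norm_mul, h1, h2, one_mul]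
    exact le_refl _
  calc (∫ τ : ℝ, G τ * Complex.exp (Complex.I * τ * ξ) * Complex.exp (-(ε : ℂ) * (τ : ℂ) ^ 2))
      = ∫ τ : ℝ, ∫ p, F τ p ∂μ := by
        refine integral_congr_ae (Filter.Eventually.of_forall fun τ => ?_)
        dsimp only
        rw [hG, ← integral_mul_const, ← integral_mul_const]
        refine integral_congr_ae (Filter.Eventually.of_forall fun p => ?_)
        have : Complex.exp (Complex.I * ((ξ - s p : ℝ) : ℂ) * (τ : ℂ))
            = Complex.exp (-Complex.I * τ * s p) * Complex.exp (Complex.I * τ * ξ) := by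
          rw [← Complex.exp_add]; congr 1; push_cast; ring
        rw [hF]; dsimp only; rw [this]; ring
    _ = ∫ p, (∫ τ : ℝ, F τ p) ∂μ := integral_integral_swap hFint
    _ = ∫ p, ((Real.pi : ℂ) / ε) ^ (1/2 : ℂ) *
          Complex.exp (-((ξ - s p : ℝ) : ℂ) ^ 2 / (4 * ε)) * f p ∂μ := by
        refine integral_congr_ae (Filter.Eventually.of_forall fun p => ?_)
        rw [hF]; dsimp only
        rw [integral_mul_const, fourierIntegral_gaussian (by simpa using hε) ((ξ - s p : ℝ) : ℂ)]

theorem stmt_7 (D : Set E3) (hDne : D.Nonempty) (hDbdd : Bornology.IsBounded D)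
    (hDmeas : MeasurableSet D)
    (tmin tmax : ℝ) (htmin : 0 ≤ tmin) (ht : tmin < tmax)
    (xhat : E3) (hx : ‖xhat‖ = 1)
    (f : E3 × ℝ → ℂ)
    (hf : MemLp f 2 ((volume : Measure (E3 × ℝ)).restrict (D ×ˢ Set.Ioo tmin tmax)))
    (G : ℝ → ℂ)
    (hG : ∀ τ : ℝ, G τ = ∫ p in D ×ˢ Set.Ioo tmin tmax, phase τ (⟪xhat, p.1⟫ - p.2) * f p) :
    -- the inverse Fourier transform of `G` vanishes outside
    -- `[inf(x̂·D) - t_max, sup(x̂·D) - t_min]`: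
    ∀ ξ : ℝ, ξ ∉ Set.Icc (sInf ((fun y => ⟪xhat, y⟫) '' D) - tmax)
        (sSup ((fun y => ⟪xhat, y⟫) '' D) - tmin) →
      ((Real.sqrt (2 * Real.pi) : ℂ))⁻¹ *
        ∫ τ : ℝ, G τ * Complex.exp (Complex.I * τ * ξ) = 0 := by
  intro ξ hξ
  by_cases hI : Integrable (fun τ : ℝ => G τ * Complex.exp (Complex.I * τ * ξ)) volume
  swap
  · rw [integral_undef hI, mul_zero]
  suffices hA : (∫ τ : ℝ, G τ * Complex.exp (Complex.I * τ * ξ)) = 0 by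
    rw [hA, mul_zero]
  -- setup
  set S : Set (E3 × ℝ) := D ×ˢ Set.Ioo tmin tmax with hS
  set μ : Measure (E3 × ℝ) := volume.restrict S with hμ
  have hSmeas : MeasurableSet S := hDmeas.prod measurableSet_Ioo
  have hSfin : volume S < ⊤ := by
    rw [hS, Measure.volume_eq_prod, Measure.prod_prod]
    exact ENNReal.mul_lt_top hDbdd.measure_lt_top measure_Ioo_lt_top
  haveI : IsFiniteMeasure μ := ⟨by rwa [hμ, Measure.restrict_apply_univ]⟩
  have hfi : Integrable f μ := hf.integrable one_le_two
  set s : E3 × ℝ → ℝ := fun p => ⟪xhat, p.1⟫ - p.2 with hsdef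
  have hs : Continuous s := (continuous_const.inner continuous_fst).sub continuous_snd
  have hG' : ∀ τ : ℝ, G τ = ∫ p, Complex.exp (-Complex.I * τ * s p) * f p ∂μ := by
    intro τ; rw [hG τ]; rfl
  -- the separation constant δ
  set a : ℝ := sInf ((fun y => ⟪xhat, y⟫) '' D) - tmax with ha
  set b : ℝ := sSup ((fun y => ⟪xhat, y⟫) '' D) - tmin with hb
  obtain ⟨R, hR⟩ := isBounded_iff_forall_norm_le.mp hDbdd
  have hBddA : BddAbove ((fun y => ⟪xhat, y⟫) '' D) := by
    refine ⟨R, ?_⟩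
    rintro z ⟨y, hy, rfl⟩
    calc ⟪xhat, y⟫ ≤ ‖xhat‖ * ‖y‖ := real_inner_le_norm _ _
      _ ≤ R := by rw [hx, one_mul]; exact hR y hy
  have hBddB : BddBelow ((fun y => ⟪xhat, y⟫) '' D) := by
    refine ⟨-R, ?_⟩
    rintro z ⟨y, hy, rfl⟩
    have h := abs_le.mp ((abs_real_inner_le_norm xhat y).trans
      (((by rw [hx, one_mul] : ‖xhat‖ * ‖y‖ ≤ ‖y‖)).trans (hR y hy)))
    exact h.1
  have hmem : ∀ p ∈ S, s p ∈ Set.Icc a b := by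
    rintro ⟨y, t⟩ hp
    rw [hS, Set.mem_prod] at hp
    have h1 : sInf ((fun y => ⟪xhat, y⟫) '' D) ≤ ⟪xhat, y⟫ := csInf_le hBddB ⟨y, hp.1, rfl⟩
    have h2 : ⟪xhat, y⟫ ≤ sSup ((fun y => ⟪xhat, y⟫) '' D) := le_csSup hBddA ⟨y, hp.1, rfl⟩
    have ht1 := hp.2.1
    have ht2 := hp.2.2
    constructor
    · show a ≤ ⟪xhat, y⟫ - t
      rw [ha]; linarith
    · show ⟪xhat, y⟫ - t ≤ b
      rw [hb]; linarith
  obtain ⟨δ, hδpos, hδ⟩ : ∃ δ > 0, ∀ u ∈ Set.Icc a b, δ ^ 2 ≤ (ξ - u) ^ 2 := by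
    rw [Set.mem_Icc, not_and_or, not_le, not_le] at hξ
    rcases hξ with h | h
    · refine ⟨a - ξ, by linarith, fun u hu => ?_⟩
      nlinarith [hu.1]
    · refine ⟨ξ - b, by linarith, fun u hu => ?_⟩
      nlinarith [hu.2]
  -- Gaussian regularization
  set ε : ℕ → ℝ := fun n => ((n : ℝ) + 1)⁻¹ with hεdef
  have hεpos : ∀ n, 0 < ε n := fun n => by positivity
  set J : ℕ → ℂ := fun n =>
    ∫ τ : ℝ, G τ * Complex.exp (Complex.I * τ * ξ) * Complex.exp (-(ε n : ℂ) * (τ : ℂ) ^ 2)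
    with hJ
  -- dominated convergence: J n → A
  have hJA : Tendsto J atTop
      (𝓝 (∫ τ : ℝ, G τ * Complex.exp (Complex.I * τ * ξ))) := by
    refine tendsto_integral_of_dominated_convergence
      (fun τ => ‖G τ * Complex.exp (Complex.I * τ * ξ)‖)
      (fun n => hI.1.mul ?_) hI.norm (fun n => ?_) ?_
    · exact (Complex.continuous_exp.comp
        (continuous_const.mul ((Complex.continuous_ofReal).pow 2))).aestronglyMeasurable
    · refine Filter.Eventually.of_forall fun τ => ?_
      rw [norm_mul]
      refine mul_le_of_le_one_right (norm_nonneg _) ?_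
      rw [show (-(ε n : ℂ) * (τ : ℂ) ^ 2) = ((-(ε n) * τ ^ 2 : ℝ) : ℂ) by push_cast; ring,
        Complex.norm_exp_ofReal]
      exact Real.exp_le_one_iff.mpr (by nlinarith [sq_nonneg τ, (hεpos n).le])
    · refine Filter.Eventually.of_forall fun τ => ?_
      have h0 : Tendsto (fun n : ℕ => (ε n : ℂ)) atTop (𝓝 0) := by
        have : Tendsto ε atTop (𝓝 0) := by
          rw [hεdef]; simpa only [one_div] using tendsto_one_div_add_atTop_nhds_zero_nat (𝕜 := ℝ)
        simpa [Function.comp_def] using (Complex.continuous_ofReal.tendsto 0).comp this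
      have h1 : Tendsto (fun n : ℕ => -(ε n : ℂ) * (τ : ℂ) ^ 2) atTop (𝓝 0) := by
        simpa using (h0.neg.mul_const ((τ : ℂ) ^ 2))
      have h2 : Tendsto (fun n : ℕ => Complex.exp (-(ε n : ℂ) * (τ : ℂ) ^ 2)) atTop (𝓝 1) := by
        simpa [Function.comp_def] using (Complex.continuous_exp.tendsto 0).comp h1
      simpa using tendsto_const_nhds.mul h2
  -- the Gaussian formula and the bound
  set K : ℝ := ∫ p, ‖f p‖ ∂μ with hK
  have hKnn : 0 ≤ K := integral_nonneg fun p => norm_nonneg _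
  have hbound : ∀ n, ‖J n‖ ≤
      (Real.pi / ε n) ^ (1/2 : ℝ) * Real.exp (-δ ^ 2 / (4 * ε n)) * K := by
    intro n
    have hkey := aux_key μ s hs f hfi ξ (ε n) (hεpos n) G hG'
    rw [hJ]
    dsimp only
    rw [hkey]
    have hb : ‖∫ p, ((Real.pi : ℂ) / (ε n)) ^ (1/2 : ℂ) *
        Complex.exp (-((ξ - s p : ℝ) : ℂ) ^ 2 / (4 * (ε n))) * f p ∂μ‖ ≤
        ∫ p, (Real.pi / ε n) ^ (1/2 : ℝ) * Real.exp (-δ ^ 2 / (4 * ε n)) * ‖f p‖ ∂μ := by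
      refine norm_integral_le_of_norm_le ((hfi.norm.const_mul _)) ?_
      rw [hμ]
      filter_upwards [ae_restrict_mem hSmeas] with p hp
      have hcd : (((Real.pi : ℂ)) / ((ε n : ℝ) : ℂ)) = (((Real.pi / ε n : ℝ)) : ℂ) := by
        push_cast; ring
      have h1 : ‖((Real.pi : ℂ) / (ε n)) ^ (1/2 : ℂ)‖ = (Real.pi / ε n) ^ (1/2 : ℝ) := by
        rw [hcd,
          Complex.norm_cpow_eq_rpow_re_of_pos (div_pos Real.pi_pos (hεpos n))]
        norm_num
      have h2 : ‖Complex.exp (-((ξ - s p : ℝ) : ℂ) ^ 2 / (4 * (ε n : ℂ)))‖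
          = Real.exp (-(ξ - s p) ^ 2 / (4 * ε n)) := by
        rw [show (-((ξ - s p : ℝ) : ℂ) ^ 2 / (4 * (ε n : ℂ)))
            = ((-(ξ - s p) ^ 2 / (4 * ε n) : ℝ) : ℂ) by push_cast; ring,
          Complex.norm_exp_ofReal]
      rw [norm_mul, norm_mul, h1, h2]
      have h3 : Real.exp (-(ξ - s p) ^ 2 / (4 * ε n)) ≤ Real.exp (-δ ^ 2 / (4 * ε n)) := by
        apply Real.exp_le_exp.mpr
        have := hδ (s p) (hmem p hp)
        have h4 : (0 : ℝ) < 4 * ε n := by positivity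
        rw [div_le_div_iff₀ h4 h4]
        nlinarith
      have h5 : (0:ℝ) ≤ (Real.pi / ε n) ^ (1/2 : ℝ) := by positivity
      exact mul_le_mul_of_nonneg_right
        (mul_le_mul_of_nonneg_left h3 h5) (norm_nonneg _)
    calc ‖∫ p, ((Real.pi : ℂ) / (ε n)) ^ (1/2 : ℂ) *
          Complex.exp (-((ξ - s p : ℝ) : ℂ) ^ 2 / (4 * (ε n))) * f p ∂μ‖
        ≤ ∫ p, (Real.pi / ε n) ^ (1/2 : ℝ) * Real.exp (-δ ^ 2 / (4 * ε n)) * ‖f p‖ ∂μ := hb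
      _ = (Real.pi / ε n) ^ (1/2 : ℝ) * Real.exp (-δ ^ 2 / (4 * ε n)) * K := by
          rw [hK, integral_const_mul]
  -- the bound tends to zero
  have hbz : Tendsto (fun n =>
      (Real.pi / ε n) ^ (1/2 : ℝ) * Real.exp (-δ ^ 2 / (4 * ε n)) * K) atTop (𝓝 0) := by
    have hmain : Tendsto (fun u : ℝ =>
        (Real.pi * u) ^ (1/2 : ℝ) * Real.exp (-(δ ^ 2 / 4) * u) * K) atTop (𝓝 0) := by
      have h1 : Tendsto (fun u : ℝ => u ^ (1/2 : ℝ) * Real.exp (-(δ ^ 2 / 4) * u))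
          atTop (𝓝 0) :=
        tendsto_rpow_mul_exp_neg_mul_atTop_nhds_zero (1/2) (δ ^ 2 / 4) (by positivity)
      have h2 : Tendsto (fun u : ℝ =>
          Real.pi ^ (1/2 : ℝ) * (u ^ (1/2 : ℝ) * Real.exp (-(δ ^ 2 / 4) * u)) * K)
          atTop (𝓝 0) := by
        simpa using (h1.const_mul (Real.pi ^ (1/2 : ℝ))).mul_const K
      refine h2.congr' ?_
      filter_upwards [eventually_ge_atTop (0:ℝ)] with u hu
      rw [Real.mul_rpow Real.pi_pos.le hu]
      ring
    have hcomp : Tendsto (fun n : ℕ => ((n : ℝ) + 1)) atTop atTop :=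
      tendsto_atTop_add_const_right atTop 1 tendsto_natCast_atTop_atTop
    have := hmain.comp hcomp
    refine this.congr fun n => ?_
    have hne : ((n : ℝ) + 1) ≠ 0 := by positivity
    simp only [Function.comp, hεdef]
    have e1 : Real.pi / ((n : ℝ) + 1)⁻¹ = Real.pi * ((n : ℝ) + 1) := by field_simp
    have e2 : -δ ^ 2 / (4 * ((n : ℝ) + 1)⁻¹) = -(δ ^ 2 / 4) * ((n : ℝ) + 1) := by
      field_simp
    rw [e1, e2]
  -- conclude
  have hJ0 : Tendsto J atTop (𝓝 0) := squeeze_zero_norm hbound hbz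
  exact tendsto_nhds_unique hJA hJ0

end
end

section
/- Let D₁, D₂ ⊂ ℝ³ be bounded domains with x̂·D₁ ∩ x̂·D₂ = ∅ for a fixed x̂ ∈ S², and let T = t_max − t_min > 0. Suppose inf(x̂·D₁) − sup(x̂·D₂) > T or inf(x̂·D₂) − sup(x̂·D₁) > T. If L_{D₁} f₁ = L_{D₂} f₂ in L²(0,K) for f_j ∈ L²(D_j × (t_min, t_max)), where (L_{D_j} f)(τ) = ∫_{t_min}^{t_max} ∫_{D_j} e^{−iτ(x̂·y−t)} f(y,t) dy dt, then L_{D₁} f₁ = L_{D₂} f₂ = 0. -/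
open MeasureTheory Complex
open scoped RealInnerProductSpace

noncomputable section

namespace Stmt8Aux
open Filter


lemma re_neg_I (z : ℂ) (c : ℝ) : (-Complex.I * z * (c : ℂ)).re = c * z.im := by
  simp [Complex.mul_re, Complex.mul_im]; ring

lemma re_pos_I (z : ℂ) (c : ℝ) : (Complex.I * z * (c : ℂ)).re = -(c * z.im) := by
  simp [Complex.mul_re, Complex.mul_im]; ring

lemma norm_exp_neg_I (z : ℂ) (c : ℝ) :
    ‖Complex.exp (-Complex.I * z * (c : ℂ))‖ = Real.exp (c * z.im) := by
  rw [Complex.norm_exp, re_neg_I]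

lemma norm_exp_pos_I (z : ℂ) (c : ℝ) :
    ‖Complex.exp (Complex.I * z * (c : ℂ))‖ = Real.exp (-(c * z.im)) := by
  rw [Complex.norm_exp, re_pos_I]

variable {X : Type*} [MeasurableSpace X]

lemma meas_aux (μ : Measure X) (f : X → ℂ) (ξ : X → ℝ) (hξ : Measurable ξ)
    (hf : AEStronglyMeasurable f μ) (z : ℂ) :
    AEStronglyMeasurable (fun p => Complex.exp (-Complex.I * z * (ξ p : ℂ)) * f p) μ :=
  ((Complex.measurable_exp.comp ((Complex.measurable_ofReal.comp hξ).const_mul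
      (-Complex.I * z))).aestronglyMeasurable).mul hf

lemma int_aux (μ : Measure X) (f : X → ℂ) (ξ : X → ℝ) (hξ : Measurable ξ)
    (hf : Integrable f μ) (R : ℝ) (hR : ∀ᵐ p ∂μ, |ξ p| ≤ R) (z : ℂ) :
    Integrable (fun p => Complex.exp (-Complex.I * z * (ξ p : ℂ)) * f p) μ := by
  refine (hf.norm.const_mul (Real.exp (R * |z.im|))).mono'
    (meas_aux μ f ξ hξ hf.1 z) ?_
  filter_upwards [hR] with p hp
  rw [norm_mul, norm_exp_neg_I]
  have h1 : ξ p * z.im ≤ R * |z.im| := by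
    calc ξ p * z.im ≤ |ξ p * z.im| := le_abs_self _
      _ = |ξ p| * |z.im| := abs_mul _ _
      _ ≤ R * |z.im| := mul_le_mul_of_nonneg_right hp (abs_nonneg _)
  exact mul_le_mul_of_nonneg_right (Real.exp_le_exp.2 h1) (norm_nonneg _)

lemma bound_low (μ : Measure X) (f : X → ℂ) (ξ : X → ℝ) (hξ : Measurable ξ)
    (hf : Integrable f μ) (R : ℝ) (hR : ∀ᵐ p ∂μ, |ξ p| ≤ R)
    (a : ℝ) (ha : ∀ᵐ p ∂μ, a ≤ ξ p) (z : ℂ) (hz : z.im ≤ 0) :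
    ‖∫ p, Complex.exp (-Complex.I * z * (ξ p : ℂ)) * f p ∂μ‖ ≤
      Real.exp (a * z.im) * ∫ p, ‖f p‖ ∂μ := by
  calc ‖∫ p, Complex.exp (-Complex.I * z * (ξ p : ℂ)) * f p ∂μ‖
      ≤ ∫ p, ‖Complex.exp (-Complex.I * z * (ξ p : ℂ)) * f p‖ ∂μ :=
        norm_integral_le_integral_norm _
    _ ≤ ∫ p, Real.exp (a * z.im) * ‖f p‖ ∂μ := by
        refine integral_mono_ae (int_aux μ f ξ hξ hf R hR z).norm
          (hf.norm.const_mul _) ?_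
        filter_upwards [ha] with p hp
        rw [norm_mul, norm_exp_neg_I]
        exact mul_le_mul_of_nonneg_right
          (Real.exp_le_exp.2 (mul_le_mul_of_nonpos_right hp hz)) (norm_nonneg _)
    _ = Real.exp (a * z.im) * ∫ p, ‖f p‖ ∂μ := integral_const_mul _ _

lemma bound_high (μ : Measure X) (f : X → ℂ) (ξ : X → ℝ) (hξ : Measurable ξ)
    (hf : Integrable f μ) (R : ℝ) (hR : ∀ᵐ p ∂μ, |ξ p| ≤ R)
    (b : ℝ) (hb : ∀ᵐ p ∂μ, ξ p ≤ b) (z : ℂ) (hz : 0 ≤ z.im) :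
    ‖∫ p, Complex.exp (-Complex.I * z * (ξ p : ℂ)) * f p ∂μ‖ ≤
      Real.exp (b * z.im) * ∫ p, ‖f p‖ ∂μ := by
  calc ‖∫ p, Complex.exp (-Complex.I * z * (ξ p : ℂ)) * f p ∂μ‖
      ≤ ∫ p, ‖Complex.exp (-Complex.I * z * (ξ p : ℂ)) * f p‖ ∂μ :=
        norm_integral_le_integral_norm _
    _ ≤ ∫ p, Real.exp (b * z.im) * ‖f p‖ ∂μ := by
        refine integral_mono_ae (int_aux μ f ξ hξ hf R hR z).norm
          (hf.norm.const_mul _) ?_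
        filter_upwards [hb] with p hp
        rw [norm_mul, norm_exp_neg_I]
        exact mul_le_mul_of_nonneg_right
          (Real.exp_le_exp.2 (mul_le_mul_of_nonneg_right hp hz)) (norm_nonneg _)
    _ = Real.exp (b * z.im) * ∫ p, ‖f p‖ ∂μ := integral_const_mul _ _

lemma entire_aux (μ : Measure X) (f : X → ℂ) (ξ : X → ℝ) (hξ : Measurable ξ)
    (hf : Integrable f μ) (R : ℝ) (hR : ∀ᵐ p ∂μ, |ξ p| ≤ R) :
    Differentiable ℂ (fun z => ∫ p, Complex.exp (-Complex.I * z * (ξ p : ℂ)) * f p ∂μ) := by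
  intro z₀
  have key := hasDerivAt_integral_of_dominated_loc_of_deriv_le (μ := μ) (s := Metric.ball z₀ 1) (Metric.ball_mem_nhds z₀ one_pos)
    (F := fun z p => Complex.exp (-Complex.I * z * (ξ p : ℂ)) * f p)
    (F' := fun z p => Complex.exp (-Complex.I * z * (ξ p : ℂ)) * ((-Complex.I * (ξ p : ℂ)) * f p))
    (bound := fun p => R * Real.exp (R * (‖z₀‖ + 1)) * ‖f p‖)
    (x₀ := z₀)
    (Filter.Eventually.of_forall fun z => meas_aux μ f ξ hξ hf.1 z)
    (int_aux μ f ξ hξ hf R hR z₀)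
    (meas_aux μ _ ξ hξ
      ((((Complex.measurable_ofReal.comp hξ).const_mul (-Complex.I)).aestronglyMeasurable).mul
        hf.1) z₀)
    ?_ ((hf.norm.const_mul _)) ?_
  · exact key.2.differentiableAt
  · filter_upwards [hR] with p hp
    intro z hz
    have hRnn : 0 ≤ R := le_trans (abs_nonneg _) hp
    have him : |z.im| ≤ ‖z₀‖ + 1 := by
      have h1 : ‖z - z₀‖ < 1 := by simpa [Metric.mem_ball, dist_eq_norm] using hz
      have h2 : |z.im| ≤ ‖z‖ := Complex.abs_im_le_norm z
      have h3 : ‖z‖ - ‖z₀‖ ≤ ‖z - z₀‖ := norm_sub_norm_le _ _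
      linarith
    have h2 : ‖-Complex.I * (ξ p : ℂ)‖ = |ξ p| := by
      simp [Complex.norm_real]
    rw [norm_mul, norm_exp_neg_I, norm_mul, h2]
    have h3 : Real.exp (ξ p * z.im) ≤ Real.exp (R * (‖z₀‖ + 1)) := by
      refine Real.exp_le_exp.2 ?_
      calc ξ p * z.im ≤ |ξ p * z.im| := le_abs_self _
        _ = |ξ p| * |z.im| := abs_mul _ _
        _ ≤ R * (‖z₀‖ + 1) :=
            mul_le_mul hp him (abs_nonneg _) hRnn
    calc Real.exp (ξ p * z.im) * (|ξ p| * ‖f p‖)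
        ≤ Real.exp (R * (‖z₀‖ + 1)) * (R * ‖f p‖) :=
          mul_le_mul h3 (mul_le_mul_of_nonneg_right hp (norm_nonneg _))
            (mul_nonneg (abs_nonneg _) (norm_nonneg _)) (Real.exp_nonneg _)
      _ = R * Real.exp (R * (‖z₀‖ + 1)) * ‖f p‖ := by ring
  · refine Filter.Eventually.of_forall fun p => fun z _ => ?_
    have h1 : HasDerivAt (fun z : ℂ => -Complex.I * z * (ξ p : ℂ)) (-Complex.I * (ξ p : ℂ)) z := by
      simpa [mul_comm, mul_left_comm, mul_assoc] using
        ((hasDerivAt_id z).const_mul (-Complex.I * (ξ p : ℂ)))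
    have h2 := (h1.cexp).mul_const (f p)
    simpa [mul_comm, mul_left_comm, mul_assoc] using h2

lemma master (μ₁ μ₂ : Measure X) (f₁ f₂ : X → ℂ) (ξ : X → ℝ) (hξ : Measurable ξ)
    (hf₁ : Integrable f₁ μ₁) (hf₂ : Integrable f₂ μ₂)
    (R : ℝ) (hR₁ : ∀ᵐ p ∂μ₁, |ξ p| ≤ R) (hR₂ : ∀ᵐ p ∂μ₂, |ξ p| ≤ R)
    (a b : ℝ) (hba : b < a)
    (ha : ∀ᵐ p ∂μ₁, a ≤ ξ p) (hb : ∀ᵐ p ∂μ₂, ξ p ≤ b)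
    (Kb : ℝ) (hK : 0 < Kb)
    (heq : ∀ τ : ℝ, τ ∈ Set.Ioo (0 : ℝ) Kb →
      (∫ p, Complex.exp (-Complex.I * (τ : ℂ) * (ξ p : ℂ)) * f₁ p ∂μ₁) =
      (∫ p, Complex.exp (-Complex.I * (τ : ℂ) * (ξ p : ℂ)) * f₂ p ∂μ₂)) :
    ∀ z : ℂ, (∫ p, Complex.exp (-Complex.I * z * (ξ p : ℂ)) * f₁ p ∂μ₁) = 0 ∧
      (∫ p, Complex.exp (-Complex.I * z * (ξ p : ℂ)) * f₂ p ∂μ₂) = 0 := by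
  set G₁ : ℂ → ℂ := fun z => ∫ p, Complex.exp (-Complex.I * z * (ξ p : ℂ)) * f₁ p ∂μ₁ with hG₁
  set G₂ : ℂ → ℂ := fun z => ∫ p, Complex.exp (-Complex.I * z * (ξ p : ℂ)) * f₂ p ∂μ₂ with hG₂
  have d₁ : Differentiable ℂ G₁ := entire_aux μ₁ f₁ ξ hξ hf₁ R hR₁
  have d₂ : Differentiable ℂ G₂ := entire_aux μ₂ f₂ ξ hξ hf₂ R hR₂
  -- the sequence Kb/(n+2) accumulates at 0 inside (0, Kb)
  have humem : ∀ n : ℕ, Kb / (n + 2 : ℝ) ∈ Set.Ioo (0 : ℝ) Kb := by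
    intro n
    have hn0 : (0 : ℝ) ≤ (n : ℝ) := Nat.cast_nonneg n
    constructor
    · positivity
    · have : (1 : ℝ) < (n : ℝ) + 2 := by linarith
      exact div_lt_self hK this
  have hu : Tendsto (fun n : ℕ => ((Kb / (n + 2 : ℝ) : ℝ) : ℂ)) atTop (nhdsWithin 0 {(0 : ℂ)}ᶜ) := by
    rw [tendsto_nhdsWithin_iff]
    constructor
    · have hreal : Tendsto (fun n : ℕ => Kb / (n + 2 : ℝ)) atTop (nhds 0) := by
        apply Tendsto.div_atTop (tendsto_const_nhds)
        exact tendsto_atTop_add_const_right atTop 2 tendsto_natCast_atTop_atTop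
      have := (Complex.continuous_ofReal.tendsto 0).comp hreal
      exact this
    · refine Eventually.of_forall fun n => ?_
      simp only [Set.mem_compl_iff, Set.mem_singleton_iff]
      exact_mod_cast ne_of_gt (humem n).1
  have hfreq : ∃ᶠ z in nhdsWithin 0 {(0 : ℂ)}ᶜ, G₁ z = G₂ z :=
    hu.frequently (Eventually.frequently (Eventually.of_forall fun n => heq _ (humem n)))
  have hEq : G₁ = G₂ :=
    AnalyticOnNhd.eq_of_frequently_eq
      (d₁.differentiableOn.analyticOnNhd isOpen_univ)
      (d₂.differentiableOn.analyticOnNhd isOpen_univ) hfreq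
  -- Liouville argument
  set C₁ : ℝ := ∫ p, ‖f₁ p‖ ∂μ₁ with hC₁
  set C₂ : ℝ := ∫ p, ‖f₂ p‖ ∂μ₂ with hC₂
  have hC₂nn : 0 ≤ C₂ := integral_nonneg fun p => norm_nonneg _
  set M : ℂ → ℂ := fun z => Complex.exp (Complex.I * z * (a : ℂ)) * G₁ z with hM
  have hMdiff : Differentiable ℂ M := by
    apply Differentiable.mul _ d₁
    apply Complex.differentiable_exp.comp
    exact (differentiable_id.const_mul Complex.I).mul_const _
  have keyhigh : ∀ z : ℂ, 0 ≤ z.im → ‖M z‖ ≤ Real.exp ((b - a) * z.im) * C₂ := by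
    intro z hz
    have hMz : M z = Complex.exp (Complex.I * z * (a : ℂ)) * G₂ z := by rw [hM, hEq]
    rw [hMz, norm_mul, norm_exp_pos_I]
    calc Real.exp (-(a * z.im)) * ‖G₂ z‖
        ≤ Real.exp (-(a * z.im)) * (Real.exp (b * z.im) * C₂) :=
          mul_le_mul_of_nonneg_left (bound_high μ₂ f₂ ξ hξ hf₂ R hR₂ b hb z hz)
            (Real.exp_nonneg _)
      _ = Real.exp ((b - a) * z.im) * C₂ := by
          rw [← mul_assoc, ← Real.exp_add]; ring_nf
  have keylow : ∀ z : ℂ, z.im ≤ 0 → ‖M z‖ ≤ C₁ := by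
    intro z hz
    rw [hM, norm_mul, norm_exp_pos_I]
    calc Real.exp (-(a * z.im)) * ‖G₁ z‖
        ≤ Real.exp (-(a * z.im)) * (Real.exp (a * z.im) * C₁) :=
          mul_le_mul_of_nonneg_left (bound_low μ₁ f₁ ξ hξ hf₁ R hR₁ a ha z hz)
            (Real.exp_nonneg _)
      _ = C₁ := by rw [← mul_assoc, ← Real.exp_add, neg_add_cancel, Real.exp_zero, one_mul]
  have hbdd : Bornology.IsBounded (Set.range M) := by
    rw [isBounded_iff_forall_norm_le]
    refine ⟨max C₁ C₂, ?_⟩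
    rintro _ ⟨z, rfl⟩
    rcases le_total z.im 0 with hz | hz
    · exact le_max_of_le_left (keylow z hz)
    · refine le_max_of_le_right ?_
      calc ‖M z‖ ≤ Real.exp ((b - a) * z.im) * C₂ := keyhigh z hz
        _ ≤ 1 * C₂ := by
            refine mul_le_mul_of_nonneg_right ?_ hC₂nn
            rw [Real.exp_le_one_iff]
            exact mul_nonpos_of_nonpos_of_nonneg (by linarith) hz
        _ = C₂ := one_mul _
  have hconst : ∀ z : ℂ, M z = M 0 := fun z =>
    hMdiff.apply_eq_apply_of_bounded hbdd z 0
  have hM0 : M 0 = 0 := by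
    have hn : ∀ n : ℕ, ‖M 0‖ ≤ Real.exp ((b - a) * n) * C₂ := by
      intro n
      have him : ((n : ℂ) * Complex.I).im = (n : ℝ) := by simp
      have := keyhigh ((n : ℂ) * Complex.I) (by rw [him]; exact Nat.cast_nonneg n)
      rw [hconst ((n : ℂ) * Complex.I)] at this
      rwa [him] at this
    have hlim : Tendsto (fun n : ℕ => Real.exp ((b - a) * n) * C₂) atTop (nhds 0) := by
      have h1 : Tendsto (fun n : ℕ => (b - a) * (n : ℝ)) atTop atBot :=
        (tendsto_const_mul_atBot_of_neg (by linarith)).2 tendsto_natCast_atTop_atTop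
      have h2 := (Real.tendsto_exp_atBot.comp h1).mul_const C₂
      simpa using h2
    have : ‖M 0‖ ≤ 0 := ge_of_tendsto' hlim hn
    exact norm_le_zero_iff.1 this
  have hG₁0 : ∀ z : ℂ, G₁ z = 0 := by
    intro z
    have h := (hconst z).trans hM0
    rcases mul_eq_zero.1 h with h | h
    · exact absurd h (Complex.exp_ne_zero _)
    · exact h
  have hG₂0 : ∀ z : ℂ, G₂ z = 0 := by rw [← hEq]; exact hG₁0
  exact fun z => ⟨hG₁0 z, hG₂0 z⟩

end Stmt8Aux

open Stmt8Aux in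

theorem stmt_8 (D₁ D₂ : Set E3)
    (hD₁open : IsOpen D₁) (hD₁ne : D₁.Nonempty) (hD₁bdd : Bornology.IsBounded D₁)
    (hD₂open : IsOpen D₂) (hD₂ne : D₂.Nonempty) (hD₂bdd : Bornology.IsBounded D₂)
    (tmin tmax Kb : ℝ) (htmin : 0 ≤ tmin) (ht : tmin < tmax) (hK : 0 < Kb)
    (xhat : E3) (hx : ‖xhat‖ = 1)
    -- `x̂·D₁ ∩ x̂·D₂ = ∅`:
    (hdisj : ((fun y => ⟪xhat, y⟫) '' D₁) ∩ ((fun y => ⟪xhat, y⟫) '' D₂) = ∅)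
    -- the gap condition:
    (hgap : sInf ((fun y => ⟪xhat, y⟫) '' D₁) - sSup ((fun y => ⟪xhat, y⟫) '' D₂)
        > tmax - tmin ∨
      sInf ((fun y => ⟪xhat, y⟫) '' D₂) - sSup ((fun y => ⟪xhat, y⟫) '' D₁)
        > tmax - tmin)
    (f₁ f₂ : E3 × ℝ → ℂ)
    (hf₁ : MemLp f₁ 2 ((volume : Measure (E3 × ℝ)).restrict (D₁ ×ˢ Set.Ioo tmin tmax)))
    (hf₂ : MemLp f₂ 2 ((volume : Measure (E3 × ℝ)).restrict (D₂ ×ˢ Set.Ioo tmin tmax)))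
    (G₁ G₂ : ℝ → ℂ)
    (hG₁ : ∀ τ : ℝ, G₁ τ =
      ∫ p in D₁ ×ˢ Set.Ioo tmin tmax, phase τ (⟪xhat, p.1⟫ - p.2) * f₁ p)
    (hG₂ : ∀ τ : ℝ, G₂ τ =
      ∫ p in D₂ ×ˢ Set.Ioo tmin tmax, phase τ (⟪xhat, p.1⟫ - p.2) * f₂ p)
    -- `L_{D₁} f₁ = L_{D₂} f₂` in `L²(0,K)`:
    (heq : ∀ τ ∈ Set.Ioo (0 : ℝ) Kb, G₁ τ = G₂ τ) :
    ∀ τ : ℝ, G₁ τ = 0 ∧ G₂ τ = 0 := by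
  have hξcont : Continuous (fun p : E3 × ℝ => ⟪xhat, p.1⟫ - p.2) :=
    (continuous_const.inner continuous_fst).sub continuous_snd
  have hξm : Measurable (fun p : E3 × ℝ => ⟪xhat, p.1⟫ - p.2) := hξcont.measurable
  have hS₁m : MeasurableSet (D₁ ×ˢ Set.Ioo tmin tmax) :=
    (hD₁open.prod isOpen_Ioo).measurableSet
  have hS₂m : MeasurableSet (D₂ ×ˢ Set.Ioo tmin tmax) :=
    (hD₂open.prod isOpen_Ioo).measurableSet
  have hS₁fin : (volume : Measure (E3 × ℝ)) (D₁ ×ˢ Set.Ioo tmin tmax) < ⊤ :=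
    (hD₁bdd.prod (Metric.isBounded_Ioo tmin tmax)).measure_lt_top
  have hS₂fin : (volume : Measure (E3 × ℝ)) (D₂ ×ˢ Set.Ioo tmin tmax) < ⊤ :=
    (hD₂bdd.prod (Metric.isBounded_Ioo tmin tmax)).measure_lt_top
  haveI hfin₁ : IsFiniteMeasure ((volume : Measure (E3 × ℝ)).restrict (D₁ ×ˢ Set.Ioo tmin tmax)) :=
    ⟨by rwa [Measure.restrict_apply_univ]⟩
  haveI hfin₂ : IsFiniteMeasure ((volume : Measure (E3 × ℝ)).restrict (D₂ ×ˢ Set.Ioo tmin tmax)) :=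
    ⟨by rwa [Measure.restrict_apply_univ]⟩
  have hint₁ : Integrable f₁ ((volume : Measure (E3 × ℝ)).restrict (D₁ ×ˢ Set.Ioo tmin tmax)) :=
    hf₁.integrable one_le_two
  have hint₂ : Integrable f₂ ((volume : Measure (E3 × ℝ)).restrict (D₂ ×ˢ Set.Ioo tmin tmax)) :=
    hf₂.integrable one_le_two
  obtain ⟨R₁, hR₁⟩ := isBounded_iff_forall_norm_le.1 hD₁bdd
  obtain ⟨R₂, hR₂⟩ := isBounded_iff_forall_norm_le.1 hD₂bdd
  have hinner₁ : ∀ y ∈ D₁, |⟪xhat, y⟫| ≤ R₁ := fun y hy => by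
    calc |⟪xhat, y⟫| ≤ ‖xhat‖ * ‖y‖ := abs_real_inner_le_norm _ _
      _ = ‖y‖ := by rw [hx, one_mul]
      _ ≤ R₁ := hR₁ y hy
  have hinner₂ : ∀ y ∈ D₂, |⟪xhat, y⟫| ≤ R₂ := fun y hy => by
    calc |⟪xhat, y⟫| ≤ ‖xhat‖ * ‖y‖ := abs_real_inner_le_norm _ _
      _ = ‖y‖ := by rw [hx, one_mul]
      _ ≤ R₂ := hR₂ y hy
  set R : ℝ := max R₁ R₂ + tmax with hRdef
  have habs : ∀ (D : Set E3) (RD : ℝ), (∀ y ∈ D, |⟪xhat, y⟫| ≤ RD) → RD ≤ max R₁ R₂ →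
      ∀ p ∈ D ×ˢ Set.Ioo tmin tmax, |⟪xhat, p.1⟫ - p.2| ≤ R := by
    intro D RD hD hle p hp
    have h1 : |⟪xhat, p.1⟫| ≤ RD := hD _ hp.1
    have h2 : |p.2| ≤ tmax := abs_le.2 ⟨by linarith [hp.2.1, hp.2.2], le_of_lt hp.2.2⟩
    have h3 : |⟪xhat, p.1⟫ - p.2| ≤ |⟪xhat, p.1⟫| + |p.2| := abs_sub _ _
    simp only [hRdef]
    linarith
  have hRae₁ : ∀ᵐ p ∂((volume : Measure (E3 × ℝ)).restrict (D₁ ×ˢ Set.Ioo tmin tmax)),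
      |⟪xhat, p.1⟫ - p.2| ≤ R :=
    ae_restrict_of_forall_mem hS₁m (habs D₁ R₁ hinner₁ (le_max_left _ _))
  have hRae₂ : ∀ᵐ p ∂((volume : Measure (E3 × ℝ)).restrict (D₂ ×ˢ Set.Ioo tmin tmax)),
      |⟪xhat, p.1⟫ - p.2| ≤ R :=
    ae_restrict_of_forall_mem hS₂m (habs D₂ R₂ hinner₂ (le_max_right _ _))
  -- bddness of the projected images
  have hbdb₁ : BddBelow ((fun y => ⟪xhat, y⟫) '' D₁) := by
    refine ⟨-R₁, ?_⟩; rintro x ⟨y, hy, rfl⟩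
    exact neg_le_of_abs_le (hinner₁ y hy)
  have hbdb₂ : BddBelow ((fun y => ⟪xhat, y⟫) '' D₂) := by
    refine ⟨-R₂, ?_⟩; rintro x ⟨y, hy, rfl⟩
    exact neg_le_of_abs_le (hinner₂ y hy)
  have hbda₁ : BddAbove ((fun y => ⟪xhat, y⟫) '' D₁) := by
    refine ⟨R₁, ?_⟩; rintro x ⟨y, hy, rfl⟩
    exact le_of_abs_le (hinner₁ y hy)
  have hbda₂ : BddAbove ((fun y => ⟪xhat, y⟫) '' D₂) := by
    refine ⟨R₂, ?_⟩; rintro x ⟨y, hy, rfl⟩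
    exact le_of_abs_le (hinner₂ y hy)
  -- the equality hypothesis in raw integral form
  have heq' : ∀ τ : ℝ, τ ∈ Set.Ioo (0 : ℝ) Kb →
      (∫ p in D₁ ×ˢ Set.Ioo tmin tmax,
        Complex.exp (-Complex.I * (τ : ℂ) * ((⟪xhat, p.1⟫ - p.2 : ℝ) : ℂ)) * f₁ p) =
      (∫ p in D₂ ×ˢ Set.Ioo tmin tmax,
        Complex.exp (-Complex.I * (τ : ℂ) * ((⟪xhat, p.1⟫ - p.2 : ℝ) : ℂ)) * f₂ p) := by
    intro τ hτ
    have h := heq τ hτ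
    rw [hG₁ τ, hG₂ τ] at h
    simpa only [phase] using h
  suffices H : ∀ τ : ℝ,
      (∫ p in D₁ ×ˢ Set.Ioo tmin tmax,
        Complex.exp (-Complex.I * (τ : ℂ) * ((⟪xhat, p.1⟫ - p.2 : ℝ) : ℂ)) * f₁ p) = 0 ∧
      (∫ p in D₂ ×ˢ Set.Ioo tmin tmax,
        Complex.exp (-Complex.I * (τ : ℂ) * ((⟪xhat, p.1⟫ - p.2 : ℝ) : ℂ)) * f₂ p) = 0 by
    intro τ
    rw [hG₁ τ, hG₂ τ]
    simp only [phase]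
    exact H τ
  rcases hgap with hg | hg
  · -- D₁ is to the right
    have hba : sSup ((fun y => ⟪xhat, y⟫) '' D₂) - tmin <
        sInf ((fun y => ⟪xhat, y⟫) '' D₁) - tmax := by linarith
    have ha : ∀ᵐ p ∂((volume : Measure (E3 × ℝ)).restrict (D₁ ×ˢ Set.Ioo tmin tmax)),
        sInf ((fun y => ⟪xhat, y⟫) '' D₁) - tmax ≤ ⟪xhat, p.1⟫ - p.2 := by
      refine ae_restrict_of_forall_mem hS₁m fun p hp => ?_
      have h1 : sInf ((fun y => ⟪xhat, y⟫) '' D₁) ≤ ⟪xhat, p.1⟫ :=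
        csInf_le hbdb₁ ⟨p.1, hp.1, rfl⟩
      have h2 : p.2 < tmax := hp.2.2
      linarith
    have hb : ∀ᵐ p ∂((volume : Measure (E3 × ℝ)).restrict (D₂ ×ˢ Set.Ioo tmin tmax)),
        ⟪xhat, p.1⟫ - p.2 ≤ sSup ((fun y => ⟪xhat, y⟫) '' D₂) - tmin := by
      refine ae_restrict_of_forall_mem hS₂m fun p hp => ?_
      have h1 : ⟪xhat, p.1⟫ ≤ sSup ((fun y => ⟪xhat, y⟫) '' D₂) :=
        le_csSup hbda₂ ⟨p.1, hp.1, rfl⟩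
      have h2 : tmin < p.2 := hp.2.1
      linarith
    have res := master ((volume : Measure (E3 × ℝ)).restrict (D₁ ×ˢ Set.Ioo tmin tmax))
      ((volume : Measure (E3 × ℝ)).restrict (D₂ ×ˢ Set.Ioo tmin tmax)) f₁ f₂
      (fun p => ⟪xhat, p.1⟫ - p.2) hξm hint₁ hint₂ R hRae₁ hRae₂
      (sInf ((fun y => ⟪xhat, y⟫) '' D₁) - tmax) (sSup ((fun y => ⟪xhat, y⟫) '' D₂) - tmin)
      hba ha hb Kb hK heq'
    exact fun τ => res (τ : ℂ)
  · -- D₂ is to the right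
    have hba : sSup ((fun y => ⟪xhat, y⟫) '' D₁) - tmin <
        sInf ((fun y => ⟪xhat, y⟫) '' D₂) - tmax := by linarith
    have ha : ∀ᵐ p ∂((volume : Measure (E3 × ℝ)).restrict (D₂ ×ˢ Set.Ioo tmin tmax)),
        sInf ((fun y => ⟪xhat, y⟫) '' D₂) - tmax ≤ ⟪xhat, p.1⟫ - p.2 := by
      refine ae_restrict_of_forall_mem hS₂m fun p hp => ?_
      have h1 : sInf ((fun y => ⟪xhat, y⟫) '' D₂) ≤ ⟪xhat, p.1⟫ :=
        csInf_le hbdb₂ ⟨p.1, hp.1, rfl⟩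
      have h2 : p.2 < tmax := hp.2.2
      linarith
    have hb : ∀ᵐ p ∂((volume : Measure (E3 × ℝ)).restrict (D₁ ×ˢ Set.Ioo tmin tmax)),
        ⟪xhat, p.1⟫ - p.2 ≤ sSup ((fun y => ⟪xhat, y⟫) '' D₁) - tmin := by
      refine ae_restrict_of_forall_mem hS₁m fun p hp => ?_
      have h1 : ⟪xhat, p.1⟫ ≤ sSup ((fun y => ⟪xhat, y⟫) '' D₁) :=
        le_csSup hbda₁ ⟨p.1, hp.1, rfl⟩
      have h2 : tmin < p.2 := hp.2.1
      linarith
    have res := master ((volume : Measure (E3 × ℝ)).restrict (D₂ ×ˢ Set.Ioo tmin tmax))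
      ((volume : Measure (E3 × ℝ)).restrict (D₁ ×ˢ Set.Ioo tmin tmax)) f₂ f₁
      (fun p => ⟪xhat, p.1⟫ - p.2) hξm hint₂ hint₁ R hRae₂ hRae₁
      (sInf ((fun y => ⟪xhat, y⟫) '' D₂) - tmax) (sSup ((fun y => ⟪xhat, y⟫) '' D₁) - tmin)
      hba ha hb Kb hK (fun τ hτ => (heq' τ hτ).symm)
    exact fun τ => ⟨(res (τ : ℂ)).2, (res (τ : ℂ)).1⟩

end
end

section
/- Let D ⊂ ℝ³ be a bounded domain, x̂ ∈ S², and K_D = {y ∈ ℝ³ : inf(x̂·D) < x̂·y < sup(x̂·D)}. If y ∉ K_D, then for every ε > 0 the test function φ_{y,ε} is not in the range of L_D. -/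
open MeasureTheory Complex
open scoped RealInnerProductSpace

set_option maxHeartbeats 1000000

noncomputable section

/-- The test function `φ_{y,ε}`. -/
def testFn (xhat y : E3) (ε tmin tmax : ℝ) (k : ℝ) : ℂ :=
  (((tmax - tmin) * (volume (Metric.ball y ε)).toReal : ℝ) : ℂ)⁻¹ *
    ∫ t in Set.Ioo tmin tmax, ∫ z in Metric.ball y ε, phase k (⟪xhat, z⟫ - t)

section Helpers
open Metric

lemma norm_exp_phase (τ : ℂ) (c : ℝ) :
    ‖Complex.exp (-Complex.I * τ * c)‖ = Real.exp (τ.im * c) := by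
  rw [Complex.norm_exp]
  congr 1
  simp [Complex.mul_re, Complex.mul_im]

lemma hasDerivAt_phase (c : ℝ) (τ : ℂ) :
    HasDerivAt (fun τ : ℂ => Complex.exp (-Complex.I * τ * c))
      (-Complex.I * c * Complex.exp (-Complex.I * τ * c)) τ := by
  have h : HasDerivAt (fun τ : ℂ => -Complex.I * τ * (c : ℂ)) (-Complex.I * c) τ := by
    simpa using ((hasDerivAt_id τ).const_mul (-Complex.I)).mul_const (c : ℂ)
  simpa [mul_comm] using h.cexp

lemma phase_eval_imag (σ c : ℝ) :
    Complex.exp (-Complex.I * (Complex.I * σ) * c) = ((Real.exp (σ * c) : ℝ) : ℂ) := by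
  rw [Complex.ofReal_exp]
  congr 1
  push_cast
  linear_combination (-(σ:ℂ) * c) * Complex.I_mul_I

lemma integrable_phase_mul {α : Type*} [MeasurableSpace α] {μ : Measure α}
    {ξ : α → ℝ} {u : α → ℂ} (hξ : AEStronglyMeasurable ξ μ) {M : ℝ}
    (hM : ∀ᵐ p ∂μ, |ξ p| ≤ M) (hu : Integrable u μ) (τ : ℂ) :
    Integrable (fun p => Complex.exp (-Complex.I * τ * ξ p) * u p) μ := by
  have hmeas : AEStronglyMeasurable (fun p => Complex.exp (-Complex.I * τ * ξ p)) μ := by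
    have : Continuous fun c : ℝ => Complex.exp (-Complex.I * τ * c) := by continuity
    exact this.comp_aestronglyMeasurable hξ
  refine (hu.norm.const_mul (Real.exp (‖τ‖ * M))).mono' (hmeas.mul hu.aestronglyMeasurable) ?_
  filter_upwards [hM] with p hp
  rw [norm_mul, norm_exp_phase]
  have h1 : τ.im * ξ p ≤ ‖τ‖ * M := by
    calc τ.im * ξ p ≤ |τ.im * ξ p| := le_abs_self _
    _ = |τ.im| * |ξ p| := abs_mul _ _
    _ ≤ ‖τ‖ * M := by
        apply mul_le_mul _ hp (abs_nonneg _) (norm_nonneg _)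
        exact Complex.abs_im_le_norm τ
  gcongr

lemma entire_param {α : Type*} [MeasurableSpace α] {μ : Measure α}
    {ξ : α → ℝ} {u : α → ℂ} (hξ : AEStronglyMeasurable ξ μ)
    {M : ℝ} (hM : ∀ᵐ p ∂μ, |ξ p| ≤ M) (hu : Integrable u μ) :
    Differentiable ℂ (fun τ : ℂ => ∫ p, Complex.exp (-Complex.I * τ * ξ p) * u p ∂μ) := by
  intro τ₀
  have key := hasDerivAt_integral_of_dominated_loc_of_deriv_le (μ := μ)
    (F := fun (τ : ℂ) p => Complex.exp (-Complex.I * τ * ξ p) * u p)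
    (F' := fun (τ : ℂ) p => (-Complex.I * ξ p * Complex.exp (-Complex.I * τ * ξ p)) * u p)
    (x₀ := τ₀) (bound := fun p => (M * Real.exp ((‖τ₀‖ + 1) * M)) * ‖u p‖)
    (Metric.ball_mem_nhds τ₀ one_pos)
    (Filter.Eventually.of_forall fun τ =>
      (integrable_phase_mul hξ hM hu τ).aestronglyMeasurable)
    (integrable_phase_mul hξ hM hu τ₀)
    ?_ ?_ ((hu.norm.const_mul _)) ?_
  · exact key.2.differentiableAt
  · -- F' meas
    have hmeas : AEStronglyMeasurable
        (fun p => -Complex.I * ξ p * Complex.exp (-Complex.I * τ₀ * ξ p)) μ := by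
      have : Continuous fun c : ℝ => -Complex.I * c * Complex.exp (-Complex.I * τ₀ * c) := by
        continuity
      exact this.comp_aestronglyMeasurable hξ
    exact hmeas.mul hu.aestronglyMeasurable
  · -- bound
    filter_upwards [hM] with p hp
    intro τ hτ
    have hM0 : 0 ≤ M := le_trans (abs_nonneg _) hp
    have hτn : ‖τ‖ ≤ ‖τ₀‖ + 1 := by
      have := mem_ball_iff_norm.mp hτ
      calc ‖τ‖ = ‖τ₀ + (τ - τ₀)‖ := by ring_nf
      _ ≤ ‖τ₀‖ + ‖τ - τ₀‖ := norm_add_le _ _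
      _ ≤ ‖τ₀‖ + 1 := by linarith
    rw [norm_mul, norm_mul, norm_exp_phase]
    have h0 : ‖-Complex.I * (ξ p : ℂ)‖ = |ξ p| := by
      simp
    rw [h0]
    have h1 : τ.im * ξ p ≤ (‖τ₀‖ + 1) * M := by
      calc τ.im * ξ p ≤ |τ.im * ξ p| := le_abs_self _
      _ = |τ.im| * |ξ p| := abs_mul _ _
      _ ≤ (‖τ₀‖ + 1) * M := by
          apply mul_le_mul _ hp (abs_nonneg _) (by positivity)
          calc |τ.im| ≤ ‖τ‖ := by exact Complex.abs_im_le_norm τ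
          _ ≤ ‖τ₀‖ + 1 := hτn
    gcongr
  · -- h_diff
    refine Filter.Eventually.of_forall fun p => fun τ _ => ?_
    exact (hasDerivAt_phase (ξ p) τ).mul_const (u p)

lemma lb_exp {α : Type*} [MeasurableSpace α] {μ : Measure α} {s S : Set α}
    (hS : MeasurableSet S) (hSs : S ⊆ s) (hμS : μ S ≠ ⊤) {g : α → ℝ} {r : ℝ}
    (hint : IntegrableOn (fun p => Real.exp (g p)) s μ)
    (hg : ∀ p ∈ S, r ≤ g p) :
    (μ S).toReal * Real.exp r ≤ ∫ p in s, Real.exp (g p) ∂μ := by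
  have h1 : ∫ _ in S, (Real.exp r) ∂μ ≤ ∫ p in S, Real.exp (g p) ∂μ :=
    setIntegral_mono_on (integrableOn_const hμS) (hint.mono_set hSs) hS
      (fun p hp => Real.exp_le_exp.2 (hg p hp))
  have h2 : ∫ p in S, Real.exp (g p) ∂μ ≤ ∫ p in s, Real.exp (g p) ∂μ :=
    setIntegral_mono_set hint (Filter.Eventually.of_forall fun p => (Real.exp_pos _).le)
      (HasSubset.Subset.eventuallyLE hSs)
  calc (μ S).toReal * Real.exp r = ∫ _ in S, Real.exp r ∂μ := by
        rw [setIntegral_const]; simp [smul_eq_mul, Measure.real]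
  _ ≤ _ := h1.trans h2

lemma integrableOn_exp_of_bound {α : Type*} [MeasurableSpace α] {μ : Measure α} {s : Set α}
    (hs : MeasurableSet s) (hμ : μ s ≠ ⊤) {g : α → ℝ}
    (hg : AEStronglyMeasurable g (μ.restrict s))
    {M : ℝ} (hM : ∀ p ∈ s, g p ≤ M) :
    IntegrableOn (fun p => Real.exp (g p)) s μ := by
  refine Integrable.mono'
    (integrableOn_const hμ : IntegrableOn (fun _ => Real.exp M) s μ)
    (Real.continuous_exp.comp_aestronglyMeasurable hg) ?_
  rw [ae_restrict_iff' hs]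
  refine Filter.Eventually.of_forall fun p hp => ?_
  rw [Real.norm_eq_abs, abs_of_pos (Real.exp_pos _)]
  exact Real.exp_le_exp.2 (hM p hp)

lemma no_uniform_exp_bound {K₁ K₂ α β : ℝ} (hK₁ : 0 < K₁) (hαβ : β < α)
    (h : ∀ σ : ℝ, 0 ≤ σ → K₁ * Real.exp (σ * α) ≤ K₂ * Real.exp (σ * β)) : False := by
  have h0 := h 0 le_rfl
  simp only [zero_mul, Real.exp_zero, mul_one] at h0
  have hK₂ : 0 < K₂ := lt_of_lt_of_le hK₁ h0
  set L := Real.log (K₂ / K₁) with hL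
  have key : ∀ σ : ℝ, 0 ≤ σ → σ * (α - β) ≤ L := by
    intro σ hσ
    have h1 := h σ hσ
    have h2 : Real.exp (σ * (α - β)) ≤ K₂ / K₁ := by
      rw [le_div_iff₀ hK₁]
      have : Real.exp (σ * (α - β)) * K₁ * Real.exp (σ * β) ≤ K₂ * Real.exp (σ * β) := by
        calc Real.exp (σ * (α - β)) * K₁ * Real.exp (σ * β)
            = K₁ * (Real.exp (σ * (α - β)) * Real.exp (σ * β)) := by ring
        _ = K₁ * Real.exp (σ * α) := by rw [← Real.exp_add]; congr 2; ring
        _ ≤ K₂ * Real.exp (σ * β) := h1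
      exact le_of_mul_le_mul_right this (Real.exp_pos _)
    rw [hL, Real.le_log_iff_exp_le (by positivity)]
    exact h2
  rcases le_or_gt 0 ((L + 1) / (α - β)) with hq | hq
  · have := key _ hq
    rw [div_mul_cancel₀ _ (by linarith : α - β ≠ 0)] at this
    linarith
  · have := key 0 le_rfl
    have hL1 : L + 1 < 0 := by
      by_contra hc
      push_neg at hc
      have : 0 ≤ (L + 1) / (α - β) := div_nonneg (by linarith) (by linarith)
      linarith
    simp at this
    linarith


end Helpers

open Metric

theorem stmt_12 (D : Set E3) (hDopen : IsOpen D) (hDne : D.Nonempty)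
    (hDbdd : Bornology.IsBounded D) (hDmeas : MeasurableSet D)
    (tmin tmax Kb : ℝ) (htmin : 0 ≤ tmin) (ht : tmin < tmax) (hK : 0 < Kb)
    (xhat : E3) (hx : ‖xhat‖ = 1) (y : E3)
    -- `y ∉ K_D`:
    (hy : ¬ (sInf ((fun z => ⟪xhat, z⟫) '' D) < ⟪xhat, y⟫ ∧
             ⟪xhat, y⟫ < sSup ((fun z => ⟪xhat, z⟫) '' D))) :
    -- for every `ε > 0`, `φ_{y,ε}` is not in the range of `L_D`:
    ∀ ε > (0 : ℝ),
      ¬ ∃ u : E3 × ℝ → ℂ,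
        MemLp u 2 ((volume : Measure (E3 × ℝ)).restrict (D ×ˢ Set.Ioo tmin tmax)) ∧
        ∀ τ ∈ Set.Ioo (0 : ℝ) Kb,
          testFn xhat y ε tmin tmax τ =
            ∫ p in D ×ˢ Set.Ioo tmin tmax, phase τ (⟪xhat, p.1⟫ - p.2) * u p := by
  intro ε hε
  rintro ⟨u, hu2, hLu⟩
  set b := sSup ((fun z => ⟪xhat, z⟫) '' D) with hbdef
  set a := sInf ((fun z => ⟪xhat, z⟫) '' D) with hadef
  have htmax : 0 < tmax := lt_of_le_of_lt htmin ht
  -- boundedness facts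
  obtain ⟨R₀, hR₀⟩ := hDbdd.subset_closedBall 0
  set R := max R₀ 0 with hRdef
  have hDR : ∀ z ∈ D, ‖z‖ ≤ R := fun z hz => by
    have := hR₀ hz
    rw [Metric.mem_closedBall, dist_zero_right] at this
    exact this.trans (le_max_left _ _)
  have hDinner : ∀ z ∈ D, |⟪xhat, z⟫| ≤ R := fun z hz => by
    calc |⟪xhat, z⟫| ≤ ‖xhat‖ * ‖z‖ := abs_real_inner_le_norm _ _
    _ = ‖z‖ := by rw [hx, one_mul]
    _ ≤ R := hDR z hz
  have hbddA : BddAbove ((fun z => ⟪xhat, z⟫) '' D) :=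
    ⟨R, by rintro _ ⟨z, hz, rfl⟩; exact (abs_le.1 (hDinner z hz)).2⟩
  have hbddB : BddBelow ((fun z => ⟪xhat, z⟫) '' D) :=
    ⟨-R, by rintro _ ⟨z, hz, rfl⟩; exact (abs_le.1 (hDinner z hz)).1⟩
  have hDb : ∀ z ∈ D, ⟪xhat, z⟫ ≤ b := fun z hz => le_csSup hbddA ⟨z, hz, rfl⟩
  have hDa : ∀ z ∈ D, a ≤ ⟪xhat, z⟫ := fun z hz => csInf_le hbddB ⟨z, hz, rfl⟩
  have hab : a ≤ b := by
    obtain ⟨z, hz⟩ := hDne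
    exact le_trans (hDa z hz) (hDb z hz)
  -- the measure on the product
  set s₀ : Set (E3 × ℝ) := D ×ˢ Set.Ioo tmin tmax with hs₀def
  have hs₀meas : MeasurableSet s₀ := hDmeas.prod measurableSet_Ioo
  have hs₀fin : volume s₀ ≠ ⊤ :=
    (Bornology.IsBounded.measure_lt_top (hDbdd.prod (Metric.isBounded_Ioo tmin tmax))).ne
  set μres := (volume : Measure (E3 × ℝ)).restrict s₀ with hμresdef
  haveI : IsFiniteMeasure μres :=
    ⟨by rw [hμresdef, Measure.restrict_apply_univ]; exact lt_top_iff_ne_top.2 hs₀fin⟩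
  have huint : Integrable u μres :=
    memLp_one_iff_integrable.mp (hu2.mono_exponent one_le_two)
  -- phase variable bounds
  set ξ : E3 × ℝ → ℝ := fun p => ⟪xhat, p.1⟫ - p.2 with hξdef
  have hξcont : Continuous ξ := (continuous_const.inner continuous_fst).sub continuous_snd
  have hξmeas : AEStronglyMeasurable ξ μres := hξcont.aestronglyMeasurable
  set M := R + tmax with hMdef
  have hξbdd : ∀ p ∈ s₀, |ξ p| ≤ M := by
    rintro ⟨z, t⟩ hp
    rw [hs₀def, Set.mem_prod] at hp
    obtain ⟨hz, ht'⟩ := hp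
    obtain ⟨ht1, ht2⟩ := ht'
    have h1 := abs_le.1 (hDinner z hz)
    have hMeq : M = R + tmax := hMdef
    have hxi : ξ (z, t) = ⟪xhat, z⟫ - t := rfl
    rw [hxi, hMeq, abs_le]
    constructor <;> [linarith [h1.1]; linarith [h1.2]]
  have hξae : ∀ᵐ p ∂μres, |ξ p| ≤ M :=
    (ae_restrict_iff' hs₀meas).2 (Filter.Eventually.of_forall hξbdd)
  -- the entire functions
  set A : ℂ → ℂ :=
    fun τ => ∫ z in Metric.ball y ε, Complex.exp (-Complex.I * τ * (⟪xhat, z⟫ : ℝ)) * (1:ℂ)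
    with hAdef
  set B : ℂ → ℂ :=
    fun τ => ∫ t in Set.Ioo tmin tmax, Complex.exp (-Complex.I * τ * ((-t : ℝ) : ℂ)) * (1:ℂ)
    with hBdef
  set c : ℝ := (tmax - tmin) * (volume (Metric.ball y ε)).toReal with hcdef
  have hball_fin : volume (Metric.ball y ε) ≠ ⊤ := measure_ball_lt_top.ne
  have hball_pos : 0 < (volume (Metric.ball y ε)).toReal :=
    ENNReal.toReal_pos (measure_ball_pos volume y hε).ne' hball_fin
  have hc : 0 < c := mul_pos (by linarith) hball_pos
  haveI : IsFiniteMeasure ((volume : Measure E3).restrict (Metric.ball y ε)) :=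
    ⟨by rw [Measure.restrict_apply_univ]; exact lt_top_iff_ne_top.2 hball_fin⟩
  haveI : IsFiniteMeasure ((volume : Measure ℝ).restrict (Set.Ioo tmin tmax)) :=
    ⟨by rw [Measure.restrict_apply_univ, Real.volume_Ioo]; exact ENNReal.ofReal_lt_top⟩
  have hA : Differentiable ℂ A := by
    rw [hAdef]
    apply entire_param (ξ := fun z : E3 => ⟪xhat, z⟫) (M := ‖y‖ + ε)
    · exact ((continuous_const.inner continuous_id).aestronglyMeasurable)
    · rw [ae_restrict_iff' measurableSet_ball]
      refine Filter.Eventually.of_forall fun z hz => ?_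
      calc |⟪xhat, z⟫| ≤ ‖xhat‖ * ‖z‖ := abs_real_inner_le_norm _ _
      _ = ‖z‖ := by rw [hx, one_mul]
      _ ≤ ‖y‖ + ε := by
          have := mem_ball_iff_norm.mp hz
          calc ‖z‖ = ‖y + (z - y)‖ := by congr 1; abel
          _ ≤ ‖y‖ + ‖z - y‖ := norm_add_le _ _
          _ ≤ ‖y‖ + ε := by linarith
    · exact integrable_const 1
  have hB : Differentiable ℂ B := by
    rw [hBdef]
    apply entire_param (ξ := fun t : ℝ => -t) (M := tmax)
    · exact (continuous_neg.aestronglyMeasurable)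
    · rw [ae_restrict_iff' measurableSet_Ioo]
      refine Filter.Eventually.of_forall fun t ht' => ?_
      obtain ⟨h1, h2⟩ := ht'
      rw [abs_neg, abs_le]
      constructor <;> [linarith; linarith]
    · exact integrable_const 1
  set Φ : ℂ → ℂ := fun τ => (c : ℂ)⁻¹ * (A τ * B τ) with hΦdef
  have hΦ : Differentiable ℂ Φ := (hA.mul hB).const_mul _
  set Ψ : ℂ → ℂ := fun τ => ∫ p in s₀, Complex.exp (-Complex.I * τ * (ξ p : ℂ)) * u p with hΨdef
  have hΨ : Differentiable ℂ Ψ := entire_param hξmeas hξae huint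
  -- agreement with testFn on the reals
  have hΦreal : ∀ τ : ℝ, Φ τ = testFn xhat y ε tmin tmax τ := by
    intro τ
    have hinner : ∀ t : ℝ, (∫ z in Metric.ball y ε, phase τ (⟪xhat, z⟫ - t))
        = A τ * Complex.exp (-Complex.I * τ * ((-t : ℝ) : ℂ)) := by
      intro t
      rw [hAdef]
      simp only [mul_one]
      rw [← integral_mul_const]
      apply integral_congr_ae
      refine Filter.Eventually.of_forall fun z => ?_
      simp only [phase]
      rw [← Complex.exp_add]
      congr 1
      push_cast
      ring
    have hAB : A ↑τ * B ↑τ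
        = ∫ t in Set.Ioo tmin tmax, ∫ z in Metric.ball y ε, phase τ (⟪xhat, z⟫ - t) := by
      simp_rw [hinner]
      rw [hBdef]
      simp only [mul_one]
      rw [integral_const_mul]
    rw [hΦdef]
    simp only
    rw [hAB, testFn, hcdef]
  have hΨreal : ∀ τ : ℝ, τ ∈ Set.Ioo (0:ℝ) Kb → Φ τ = Ψ τ := by
    intro τ hτ
    rw [hΦreal τ, hLu τ hτ]
    rfl
  -- identity theorem
  have key : Φ = Ψ := by
    have hcl : ((Kb/2 : ℝ) : ℂ) ∈ closure ({z : ℂ | Φ z = Ψ z} \ {((Kb/2 : ℝ) : ℂ)}) := by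
      rw [Metric.mem_closure_iff]
      intro δ hδ
      set m := min (δ/2) (Kb/4) with hm
      have hm0 : 0 < m := lt_min (by linarith) (by linarith)
      refine ⟨((Kb/2 + m : ℝ) : ℂ), ⟨?_, ?_⟩, ?_⟩
      · show Φ _ = Ψ _
        apply hΨreal
        constructor
        · have : (0:ℝ) < Kb/2 + m := by linarith
          exact_mod_cast this
        · have : Kb/2 + m < Kb := by
            have := min_le_right (δ/2) (Kb/4)
            linarith
          exact_mod_cast this
      · simp only [Set.mem_singleton_iff]
        intro hcontra
        rw [Complex.ofReal_inj] at hcontra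
        linarith
      · rw [Complex.isometry_ofReal.dist_eq, Real.dist_eq]
        have : |Kb/2 - (Kb/2 + m)| = m := by rw [abs_sub_comm]; simp [abs_of_pos hm0]
        rw [this]
        exact lt_of_le_of_lt (min_le_left _ _) (by linarith)
    have keyOn := AnalyticOnNhd.eqOn_of_preconnected_of_mem_closure
      (hΦ.differentiableOn.analyticOnNhd isOpen_univ)
      (hΨ.differentiableOn.analyticOnNhd isOpen_univ)
      isPreconnected_univ (Set.mem_univ _) hcl
    exact funext fun z => keyOn (Set.mem_univ z)
  -- evaluation along the imaginary axis
  set Ar : ℝ → ℝ := fun σ => ∫ z in Metric.ball y ε, Real.exp (σ * ⟪xhat, z⟫) with hArdef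
  set Br : ℝ → ℝ := fun σ => ∫ t in Set.Ioo tmin tmax, Real.exp (σ * (-t)) with hBrdef
  have hAeval : ∀ σ : ℝ, A (Complex.I * σ) = ((Ar σ : ℝ) : ℂ) := by
    intro σ
    rw [hAdef, hArdef]
    simp only [mul_one]
    have h2 : ((∫ z in Metric.ball y ε, Real.exp (σ * ⟪xhat, z⟫) : ℝ) : ℂ)
        = ∫ z in Metric.ball y ε, ((Real.exp (σ * ⟪xhat, z⟫) : ℝ) : ℂ) :=
      integral_ofReal.symm
    rw [h2]
    exact integral_congr_ae (Filter.Eventually.of_forall fun z => phase_eval_imag σ _)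
  have hBeval : ∀ σ : ℝ, B (Complex.I * σ) = ((Br σ : ℝ) : ℂ) := by
    intro σ
    rw [hBdef, hBrdef]
    simp only [mul_one]
    have h2 : ((∫ t in Set.Ioo tmin tmax, Real.exp (σ * (-t)) : ℝ) : ℂ)
        = ∫ t in Set.Ioo tmin tmax, ((Real.exp (σ * (-t)) : ℝ) : ℂ) :=
      integral_ofReal.symm
    rw [h2]
    refine integral_congr_ae (Filter.Eventually.of_forall fun t => ?_)
    exact phase_eval_imag σ (-t)
  have hArint : ∀ σ : ℝ, IntegrableOn (fun z => Real.exp (σ * ⟪xhat, z⟫)) (Metric.ball y ε) volume := by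
    intro σ
    apply integrableOn_exp_of_bound measurableSet_ball hball_fin
      ((continuous_const.mul (continuous_const.inner continuous_id)).aestronglyMeasurable)
      (M := |σ| * (‖y‖ + ε))
    intro z hz
    have h1 : |⟪xhat, z⟫| ≤ ‖y‖ + ε := by
      calc |⟪xhat, z⟫| ≤ ‖xhat‖ * ‖z‖ := abs_real_inner_le_norm _ _
      _ = ‖z‖ := by rw [hx, one_mul]
      _ ≤ ‖y‖ + ε := by
          have := mem_ball_iff_norm.mp hz
          calc ‖z‖ = ‖y + (z - y)‖ := by congr 1; abel
          _ ≤ ‖y‖ + ‖z - y‖ := norm_add_le _ _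
          _ ≤ ‖y‖ + ε := by linarith
    calc σ * ⟪xhat, z⟫ ≤ |σ * ⟪xhat, z⟫| := le_abs_self _
    _ = |σ| * |⟪xhat, z⟫| := abs_mul _ _
    _ ≤ |σ| * (‖y‖ + ε) := mul_le_mul_of_nonneg_left h1 (abs_nonneg _)
  have hIoo_fin : ∀ p q : ℝ, volume (Set.Ioo p q) ≠ ⊤ := fun p q => by
    rw [Real.volume_Ioo]; exact ENNReal.ofReal_ne_top
  have hBrint : ∀ σ : ℝ, IntegrableOn (fun t => Real.exp (σ * (-t))) (Set.Ioo tmin tmax) volume := by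
    intro σ
    apply integrableOn_exp_of_bound measurableSet_Ioo (hIoo_fin _ _)
      ((continuous_const.mul continuous_neg).aestronglyMeasurable) (M := |σ| * tmax)
    intro t ht'
    obtain ⟨h1, h2⟩ := ht'
    have h3 : |(-t : ℝ)| ≤ tmax := by rw [abs_neg, abs_le]; constructor <;> [linarith; linarith]
    calc σ * (-t) ≤ |σ * (-t)| := le_abs_self _
    _ = |σ| * |(-t:ℝ)| := abs_mul _ _
    _ ≤ |σ| * tmax := mul_le_mul_of_nonneg_left h3 (abs_nonneg _)
  have hArnn : ∀ σ : ℝ, 0 ≤ Ar σ := fun σ => integral_nonneg fun z => (Real.exp_pos _).le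
  have hBrnn : ∀ σ : ℝ, 0 ≤ Br σ := fun σ => integral_nonneg fun t => (Real.exp_pos _).le
  have hΦnorm : ∀ σ : ℝ, ‖Φ (Complex.I * σ)‖ = c⁻¹ * (Ar σ * Br σ) := by
    intro σ
    have heq : Φ (Complex.I * σ) = (((c⁻¹ * (Ar σ * Br σ)) : ℝ) : ℂ) := by
      rw [hΦdef]
      simp only
      rw [hAeval σ, hBeval σ]
      push_cast
      ring
    have hnn : 0 ≤ c⁻¹ * (Ar σ * Br σ) :=
      mul_nonneg (inv_nonneg.2 hc.le) (mul_nonneg (hArnn σ) (hBrnn σ))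
    rw [heq, Complex.norm_real, Real.norm_eq_abs, _root_.abs_of_nonneg hnn]
  set C : ℝ := ∫ p, ‖u p‖ ∂μres with hCdef
  have hΨnorm : ∀ (σ R' : ℝ), (∀ p ∈ s₀, σ * ξ p ≤ R') →
      ‖Ψ (Complex.I * σ)‖ ≤ Real.exp R' * C := by
    intro σ R' hR'
    calc ‖Ψ (Complex.I * σ)‖
        ≤ ∫ p, ‖Complex.exp (-Complex.I * (Complex.I * σ) * (ξ p : ℂ)) * u p‖ ∂μres :=
          norm_integral_le_integral_norm _
    _ ≤ ∫ p, Real.exp R' * ‖u p‖ ∂μres := by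
        refine integral_mono_ae ((integrable_phase_mul hξmeas hξae huint _).norm)
          (huint.norm.const_mul _) ?_
        rw [hμresdef]
        refine (ae_restrict_iff' hs₀meas).2 (Filter.Eventually.of_forall fun p hp => ?_)
        beta_reduce
        rw [norm_mul, phase_eval_imag, Complex.norm_real, Real.norm_eq_abs,
          abs_of_pos (Real.exp_pos _)]
        exact mul_le_mul_of_nonneg_right (Real.exp_le_exp.2 (hR' p hp)) (norm_nonneg _)
    _ = Real.exp R' * C := by rw [hCdef, integral_const_mul]
  have hΦΨ : ∀ σ : ℝ, c⁻¹ * (Ar σ * Br σ) = ‖Ψ (Complex.I * σ)‖ := by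
    intro σ
    rw [← hΦnorm σ, key]
  -- choice of δ
  set δ : ℝ := min (ε/4) ((tmax - tmin)/2) with hδdef
  have hδpos : 0 < δ := lt_min (by linarith) (by linarith)
  have hδε : δ ≤ ε/4 := min_le_left _ _
  have hδt : δ ≤ (tmax - tmin)/2 := min_le_right _ _
  -- geometric lemma for the small balls
  have hgeo : ∀ s : ℝ, s = 1 ∨ s = -1 →
      (Metric.ball (y + (s * (3*ε/4)) • xhat) (ε/8) ⊆ Metric.ball y ε) ∧
      (∀ z ∈ Metric.ball (y + (s * (3*ε/4)) • xhat) (ε/8),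
        |⟪xhat, z⟫ - (⟪xhat, y⟫ + s * (3*ε/4))| ≤ ε/8) := by
    intro s hs
    have hs1 : |s| = 1 := by rcases hs with h | h <;> simp [h]
    set w := y + (s * (3*ε/4)) • xhat with hw
    have hdist : dist w y = 3*ε/4 := by
      rw [hw, dist_eq_norm, add_sub_cancel_left, norm_smul, hx, mul_one, Real.norm_eq_abs,
        abs_mul, hs1, one_mul, abs_of_pos (by linarith)]
    constructor
    · intro z hz
      rw [mem_ball] at hz ⊢
      calc dist z y ≤ dist z w + dist w y := dist_triangle _ _ _
      _ < ε/8 + 3*ε/4 := by rw [hdist] at *; linarith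
      _ ≤ ε := by linarith
    · intro z hz
      have h1 : ⟪xhat, z⟫ = ⟪xhat, w⟫ + ⟪xhat, z - w⟫ := by
        rw [← inner_add_right]; congr 1; abel
      have h2 : ⟪xhat, w⟫ = ⟪xhat, y⟫ + s * (3*ε/4) := by
        rw [hw, inner_add_right, real_inner_smul_right, real_inner_self_eq_norm_sq, hx]
        norm_num
      have h3 : |⟪xhat, z - w⟫| ≤ ε/8 := by
        calc |⟪xhat, z - w⟫| ≤ ‖xhat‖ * ‖z - w‖ := abs_real_inner_le_norm _ _
        _ = ‖z - w‖ := by rw [hx, one_mul]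
        _ ≤ ε/8 := by
            have := mem_ball_iff_norm.mp hz
            linarith
      rw [h1, h2]
      calc |⟪xhat, y⟫ + s * (3*ε/4) + ⟪xhat, z - w⟫ - (⟪xhat, y⟫ + s * (3*ε/4))|
          = |⟪xhat, z - w⟫| := by congr 1; ring
      _ ≤ ε/8 := h3
  rcases not_and_or.mp hy with hcase | hcase
  · -- case ⟪xhat,y⟫ ≤ a : use σ = -ρ, ρ → ∞
    have ha1 : ⟪xhat, y⟫ ≤ a := not_lt.mp hcase
    obtain ⟨hSsub, hSinner⟩ := hgeo (-1) (Or.inr rfl)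
    set S := Metric.ball (y + ((-1 : ℝ) * (3*ε/4)) • xhat) (ε/8) with hSdef
    have hSup : ∀ z ∈ S, ⟪xhat, z⟫ ≤ ⟪xhat, y⟫ - ε/2 := by
      intro z hz
      have := abs_le.1 (hSinner z hz)
      have h1 := this.2
      nlinarith [this.1, this.2]
    have hvolS : 0 < (volume S).toReal :=
      ENNReal.toReal_pos (measure_ball_pos _ _ (by linarith)).ne' measure_ball_lt_top.ne
    set K₁ : ℝ := c⁻¹ * ((volume S).toReal * δ) with hK₁def
    have hK₁pos : 0 < K₁ := by positivity
    refine no_uniform_exp_bound (K₂ := C) hK₁pos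
      (show (tmax - a) < (ε/2 - ⟪xhat, y⟫) + (tmax - δ) by linarith) ?_
    intro ρ hρ
    have hAr : (volume S).toReal * Real.exp (ρ * (ε/2 - ⟪xhat, y⟫)) ≤ Ar (-ρ) := by
      apply lb_exp measurableSet_ball hSsub measure_ball_lt_top.ne (hArint (-ρ))
      intro z hz
      have h1 := hSup z hz
      nlinarith
    have hBr : δ * Real.exp (ρ * (tmax - δ)) ≤ Br (-ρ) := by
      have hsub : Set.Ioo (tmax - δ) tmax ⊆ Set.Ioo tmin tmax :=
        Set.Ioo_subset_Ioo (by linarith) le_rfl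
      have hvol : (volume (Set.Ioo (tmax - δ) tmax)).toReal = δ := by
        rw [Real.volume_Ioo, ENNReal.toReal_ofReal (by linarith)]
        ring
      have := lb_exp measurableSet_Ioo hsub (hIoo_fin _ _) (hBrint (-ρ))
        (g := fun t => (-ρ) * (-t)) (r := ρ * (tmax - δ)) ?_
      · rwa [hvol] at this
      · intro t ht'
        obtain ⟨h1, h2⟩ := ht'
        show ρ * (tmax - δ) ≤ -ρ * -t
        nlinarith
    have hfinal : K₁ * Real.exp (ρ * ((ε/2 - ⟪xhat, y⟫) + (tmax - δ))) ≤
        C * Real.exp (ρ * (tmax - a)) := by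
      have hexp : Real.exp (ρ * ((ε/2 - ⟪xhat, y⟫) + (tmax - δ)))
          = Real.exp (ρ * (ε/2 - ⟪xhat, y⟫)) * Real.exp (ρ * (tmax - δ)) := by
        rw [← Real.exp_add]; congr 1; ring
      calc K₁ * Real.exp (ρ * ((ε/2 - ⟪xhat, y⟫) + (tmax - δ)))
          = c⁻¹ * (((volume S).toReal * Real.exp (ρ * (ε/2 - ⟪xhat, y⟫))) *
              (δ * Real.exp (ρ * (tmax - δ)))) := by rw [hexp, hK₁def]; ring
      _ ≤ c⁻¹ * (Ar (-ρ) * Br (-ρ)) := by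
          apply mul_le_mul_of_nonneg_left _ (by positivity)
          apply mul_le_mul hAr hBr (by positivity) ((by positivity : (0:ℝ) ≤ _).trans hAr)
      _ = ‖Ψ (Complex.I * (-ρ : ℝ))‖ := hΦΨ (-ρ)
      _ ≤ Real.exp (ρ * (tmax - a)) * C := by
          apply hΨnorm
          rintro ⟨z, t⟩ hp
          rw [hs₀def, Set.mem_prod] at hp
          obtain ⟨hz, ht'⟩ := hp
          obtain ⟨h1, h2⟩ := ht'
          have h3 := hDa z hz
          show (-ρ) * (⟪xhat, z⟫ - t) ≤ ρ * (tmax - a)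
          nlinarith
      _ = C * Real.exp (ρ * (tmax - a)) := mul_comm _ _
    exact hfinal
  · -- case b ≤ ⟪xhat,y⟫ : use σ = ρ → ∞
    have hb1 : b ≤ ⟪xhat, y⟫ := not_lt.mp hcase
    obtain ⟨hSsub, hSinner⟩ := hgeo 1 (Or.inl rfl)
    set S := Metric.ball (y + ((1 : ℝ) * (3*ε/4)) • xhat) (ε/8) with hSdef
    have hSlo : ∀ z ∈ S, ⟪xhat, y⟫ + ε/2 ≤ ⟪xhat, z⟫ := by
      intro z hz
      have := abs_le.1 (hSinner z hz)
      nlinarith [this.1, this.2]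
    have hvolS : 0 < (volume S).toReal :=
      ENNReal.toReal_pos (measure_ball_pos _ _ (by linarith)).ne' measure_ball_lt_top.ne
    set K₁ : ℝ := c⁻¹ * ((volume S).toReal * δ) with hK₁def
    have hK₁pos : 0 < K₁ := by positivity
    refine no_uniform_exp_bound (K₂ := C) hK₁pos
      (show (b - tmin) < (⟪xhat, y⟫ + ε/2) + (-(tmin + δ)) by linarith) ?_
    intro ρ hρ
    have hAr : (volume S).toReal * Real.exp (ρ * (⟪xhat, y⟫ + ε/2)) ≤ Ar ρ := by
      apply lb_exp measurableSet_ball hSsub measure_ball_lt_top.ne (hArint ρ)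
      intro z hz
      have h1 := hSlo z hz
      nlinarith
    have hBr : δ * Real.exp (ρ * (-(tmin + δ))) ≤ Br ρ := by
      have hsub : Set.Ioo tmin (tmin + δ) ⊆ Set.Ioo tmin tmax :=
        Set.Ioo_subset_Ioo le_rfl (by linarith)
      have hvol : (volume (Set.Ioo tmin (tmin + δ))).toReal = δ := by
        rw [Real.volume_Ioo, ENNReal.toReal_ofReal (by linarith)]
        ring
      have := lb_exp measurableSet_Ioo hsub (hIoo_fin _ _) (hBrint ρ)
        (g := fun t => ρ * (-t)) (r := ρ * (-(tmin + δ))) ?_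
      · rwa [hvol] at this
      · intro t ht'
        obtain ⟨h1, h2⟩ := ht'
        show ρ * (-(tmin + δ)) ≤ ρ * -t
        nlinarith
    have hfinal : K₁ * Real.exp (ρ * ((⟪xhat, y⟫ + ε/2) + (-(tmin + δ)))) ≤
        C * Real.exp (ρ * (b - tmin)) := by
      have hexp : Real.exp (ρ * ((⟪xhat, y⟫ + ε/2) + (-(tmin + δ))))
          = Real.exp (ρ * (⟪xhat, y⟫ + ε/2)) * Real.exp (ρ * (-(tmin + δ))) := by
        rw [← Real.exp_add]; congr 1; ring
      calc K₁ * Real.exp (ρ * ((⟪xhat, y⟫ + ε/2) + (-(tmin + δ))))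
          = c⁻¹ * (((volume S).toReal * Real.exp (ρ * (⟪xhat, y⟫ + ε/2))) *
              (δ * Real.exp (ρ * (-(tmin + δ))))) := by rw [hexp, hK₁def]; ring
      _ ≤ c⁻¹ * (Ar ρ * Br ρ) := by
          apply mul_le_mul_of_nonneg_left _ (by positivity)
          apply mul_le_mul hAr hBr (by positivity) ((by positivity : (0:ℝ) ≤ _).trans hAr)
      _ = ‖Ψ (Complex.I * (ρ : ℝ))‖ := hΦΨ ρ
      _ ≤ Real.exp (ρ * (b - tmin)) * C := by
          apply hΨnorm
          rintro ⟨z, t⟩ hp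
          rw [hs₀def, Set.mem_prod] at hp
          obtain ⟨hz, ht'⟩ := hp
          obtain ⟨h1, h2⟩ := ht'
          have h3 := hDb z hz
          show ρ * (⟪xhat, z⟫ - t) ≤ ρ * (b - tmin)
          nlinarith
      _ = C * Real.exp (ρ * (b - tmin)) := mul_comm _ _
    exact hfinal



end
end

section
/- Let w^∞(x̂, k) = (1/√(2π)) ∫_{t_min}^{t_max} ∫_D e^{−ik(x̂·y − t)} S(y,t) dy dt for k ∈ ℝ, let k_c = (k_min + k_max)/2, K = (k_max − k_min)/2, and define F: L²(0,K) → L²(0,K) by (Fφ)(τ) = ∫_0^K w^∞(x̂, k_c + τ − s) φ(s) ds. Then F = L T L*, where (Lu)(τ) = ∫_{t_min}^{t_max} ∫_D e^{−iτ(x̂·y − t)} u(y,t) dy dt, (L*φ)(y,t) = ∫_0^K e^{iτ(x̂·y − t)} φ(τ) dτ, and (Tu)(y,t) = (1/√(2π)) e^{−i k_c(x̂·y − t)} S(y,t) u(y,t). -/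
open MeasureTheory Complex
open scoped RealInnerProductSpace

noncomputable section

theorem stmt_14 (D : Set E3) (hDne : D.Nonempty) (hDbdd : Bornology.IsBounded D)
    (hDmeas : MeasurableSet D)
    (tmin tmax : ℝ) (htmin : 0 ≤ tmin) (ht : tmin < tmax)
    (kmin kmax : ℝ) (hkm : kmin < kmax)
    (xhat : E3) (hx : ‖xhat‖ = 1)
    (S : E3 → ℝ → ℝ)
    (hSmeas : Measurable (fun p : E3 × ℝ => S p.1 p.2))
    (hSbdd : ∃ M : ℝ, ∀ y ∈ D, ∀ t ∈ Set.Icc tmin tmax, |S y t| ≤ M)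
    -- the far-field pattern `w^∞(x̂,k)`:
    (w : ℝ → ℂ)
    (hw : ∀ k : ℝ, w k = ((Real.sqrt (2 * Real.pi) : ℝ) : ℂ)⁻¹ *
      ∫ p in D ×ˢ Set.Ioo tmin tmax, phase k (⟪xhat, p.1⟫ - p.2) * (S p.1 p.2 : ℂ))
    (φ : ℝ → ℂ)
    (hφ : Integrable φ ((volume : Measure ℝ).restrict (Set.Ioo 0 ((kmax - kmin) / 2)))) :
    -- `F = L 𝒯 L*` with `k_c = (k_min+k_max)/2`, `K = (k_max-k_min)/2`:
    ∀ τ ∈ Set.Ioo (0 : ℝ) ((kmax - kmin) / 2),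
      ∫ s in Set.Ioo (0 : ℝ) ((kmax - kmin) / 2), w ((kmin + kmax) / 2 + τ - s) * φ s =
        ∫ p in D ×ˢ Set.Ioo tmin tmax,
          phase τ (⟪xhat, p.1⟫ - p.2) *
            (((Real.sqrt (2 * Real.pi) : ℝ) : ℂ)⁻¹ *
              phase ((kmin + kmax) / 2) (⟪xhat, p.1⟫ - p.2) * (S p.1 p.2 : ℂ) *
              ∫ s in Set.Ioo (0 : ℝ) ((kmax - kmin) / 2),
                Complex.exp (Complex.I * s * (⟪xhat, p.1⟫ - p.2)) * φ s) := by
  intro τ hτ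
  obtain ⟨M, hM⟩ := hSbdd
  set K : ℝ := (kmax - kmin) / 2 with hK
  set kc : ℝ := (kmin + kmax) / 2 with hkc
  set c : ℂ := ((Real.sqrt (2 * Real.pi) : ℝ) : ℂ)⁻¹ with hc
  set ν : Measure ℝ := (volume : Measure ℝ).restrict (Set.Ioo 0 K) with hν
  set A : Set (E3 × ℝ) := D ×ˢ Set.Ioo tmin tmax with hA
  set μ : Measure (E3 × ℝ) := (volume : Measure (E3 × ℝ)).restrict A with hμ
  set ξ : E3 × ℝ → ℝ := fun p => ⟪xhat, p.1⟫ - p.2 with hξ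
  have hAmeas : MeasurableSet A := hDmeas.prod measurableSet_Ioo
  have hAbdd : Bornology.IsBounded A := hDbdd.prod (Metric.isBounded_Ioo tmin tmax)
  have hAfin : μ Set.univ < ⊤ := by
    rw [hμ, Measure.restrict_apply_univ]
    exact hAbdd.measure_lt_top
  haveI : IsFiniteMeasure μ := ⟨hAfin⟩
  have hξmeas : Measurable ξ := by
    apply Measurable.sub _ measurable_snd
    exact (continuous_const.inner continuous_id).measurable.comp measurable_fst
  -- the function of (s, p) to integrate
  set f : ℝ × (E3 × ℝ) → ℂ :=
    fun z => c * (phase (kc + τ - z.1) (ξ z.2) * (S z.2.1 z.2.2 : ℂ)) * φ z.1 with hf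
  have hphase_norm : ∀ (a b : ℝ), ‖phase a b‖ = 1 := by
    intro a b
    simp only [phase]
    rw [Complex.norm_exp]
    norm_num
  -- integrability of f on ν.prod μ
  have hfmeas : AEStronglyMeasurable f (ν.prod μ) := by
    apply AEStronglyMeasurable.mul _ (hφ.1.comp_quasiMeasurePreserving
      Measure.quasiMeasurePreserving_fst)
    apply aestronglyMeasurable_const.mul
    apply AEStronglyMeasurable.mul _
      ((Complex.measurable_ofReal.comp (hSmeas.comp measurable_snd)).aestronglyMeasurable)
    apply Measurable.aestronglyMeasurable
    apply Complex.measurable_exp.comp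
    apply Measurable.mul
    · exact (measurable_const.mul (Complex.measurable_ofReal.comp (measurable_const.sub measurable_fst)))
    · exact Complex.measurable_ofReal.comp (hξmeas.comp measurable_snd)
  have hfint : Integrable f (ν.prod μ) := by
    have hbound : Integrable (fun z : ℝ × (E3 × ℝ) => ‖c‖ * |M| * ‖φ z.1‖) (ν.prod μ) := by
      have h1 : Integrable (fun s : ℝ => ‖c‖ * |M| * ‖φ s‖) ν := (hφ.norm.const_mul _)
      have h2 : Integrable (fun _ : E3 × ℝ => (1 : ℝ)) μ := integrable_const 1
      have := h1.mul_prod h2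
      simpa using this
    refine hbound.mono' hfmeas ?_
    have hmem : ∀ᵐ p ∂μ, p ∈ A := ae_restrict_mem hAmeas
    have hmem' : ∀ᵐ z ∂(ν.prod μ), z.2 ∈ A :=
      Measure.quasiMeasurePreserving_snd.ae hmem
    filter_upwards [hmem'] with z hz
    simp only [hf, norm_mul, hphase_norm, Complex.norm_real, mul_one]
    rw [hA, Set.mem_prod] at hz
    have hS : |S z.2.1 z.2.2| ≤ M := hM _ hz.1 _ (Set.mem_Icc_of_Ioo hz.2)
    have : ‖(S z.2.1 z.2.2 : ℝ)‖ ≤ |M| := le_trans hS (le_abs_self M)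
    calc ‖c‖ * (1 * ‖(S z.2.1 z.2.2 : ℝ)‖) * ‖φ z.1‖
        ≤ ‖c‖ * (1 * |M|) * ‖φ z.1‖ := by
          gcongr
      _ = ‖c‖ * |M| * ‖φ z.1‖ := by ring
  -- main computation
  have step4 : ∀ p : E3 × ℝ, (∫ s, f (s, p) ∂ν) =
      phase τ (ξ p) * (c * phase kc (ξ p) * (S p.1 p.2 : ℂ) *
        ∫ s, Complex.exp (Complex.I * s * (ξ p)) * φ s ∂ν) := by
    intro p
    rw [← integral_const_mul, ← integral_const_mul]
    refine integral_congr_ae (Filter.Eventually.of_forall fun s => ?_)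
    show c * (phase (kc + τ - s) (ξ p) * (S p.1 p.2 : ℂ)) * φ s =
      phase τ (ξ p) * (c * phase kc (ξ p) * (S p.1 p.2 : ℂ) *
        (Complex.exp (Complex.I * s * (ξ p)) * φ s))
    simp only [phase]
    rw [show (-Complex.I * ((kc + τ - s : ℝ) : ℂ) * ((ξ p : ℝ) : ℂ)) =
      (-Complex.I * ((τ : ℝ) : ℂ) * ((ξ p : ℝ) : ℂ)) + ((-Complex.I * ((kc : ℝ) : ℂ) * ((ξ p : ℝ) : ℂ))
        + (Complex.I * s * (ξ p))) by push_cast; ring, Complex.exp_add, Complex.exp_add]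
    ring
  calc ∫ s in Set.Ioo (0:ℝ) K, w (kc + τ - s) * φ s
      = ∫ s, ∫ p, f (s, p) ∂μ ∂ν := by
        refine integral_congr_ae (Filter.Eventually.of_forall fun s => ?_)
        show w (kc + τ - s) * φ s =
          ∫ p, c * (phase (kc + τ - s) (ξ p) * (S p.1 p.2 : ℂ)) * φ s ∂μ
        rw [hw (kc + τ - s), ← integral_const_mul, ← integral_mul_const]
    _ = ∫ p, ∫ s, f (s, p) ∂ν ∂μ := integral_integral_swap hfint
    _ = ∫ p, phase τ (ξ p) * (c * phase kc (ξ p) * (S p.1 p.2 : ℂ) *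
          ∫ s, Complex.exp (Complex.I * s * (ξ p)) * φ s ∂ν) ∂μ :=
        integral_congr_ae (Filter.Eventually.of_forall step4)
    _ = ∫ p, phase τ (ξ p) * (c * phase kc (ξ p) * (S p.1 p.2 : ℂ) *
          ∫ s, Complex.exp (Complex.I * s * ((⟪xhat, p.1⟫ : ℂ) - (p.2 : ℂ))) * φ s ∂ν) ∂μ := by
        refine integral_congr_ae (Filter.Eventually.of_forall fun p => ?_)
        simp only [hξ]
        push_cast
        ring_nf

end
end

section
/- Suppose S(x,t) ≥ c₀ > 0 on D̄ × [t_min, t_max] with D bounded. Fix x̂ ∈ S², and for a connected component D_j of D define g_j(ξ) = ∫_{t_min}^{t_max} (∫_{{y ∈ D_j : x̂·y = ξ + t}} S(y,t) ds(y)) dt. Then g_j(ξ) > 0 for every ξ ∈ (inf(x̂·D_j) − t_max, sup(x̂·D_j) − t_min) and g_j(ξ) = 0 for ξ outside [inf(x̂·D_j) − t_max, sup(x̂·D_j) − t_min]. -/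
open MeasureTheory Complex
open scoped RealInnerProductSpace ENNReal NNReal

noncomputable section

namespace Stmt16Aux

abbrev E2' := EuclideanSpace ℝ (Fin 2)
abbrev E3' := EuclideanSpace ℝ (Fin 3)

def consMap (c : ℝ) (v : E2') : E3' :=
  (WithLp.equiv 2 (Fin 3 → ℝ)).symm (Fin.cons c (WithLp.equiv 2 (Fin 2 → ℝ) v))

lemma consMap_apply_zero (c : ℝ) (v : E2') : consMap c v 0 = c := rfl

lemma consMap_apply_succ (c : ℝ) (v : E2') (i : Fin 2) : consMap c v i.succ = v i := rfl

lemma consMap_isometry (c : ℝ) : Isometry (consMap c) := by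
  refine Isometry.of_dist_eq fun v w => ?_
  rw [EuclideanSpace.dist_eq, EuclideanSpace.dist_eq]
  congr 1
  rw [Fin.sum_univ_succ]
  simp [consMap_apply_zero, consMap_apply_succ]

lemma consMap_cont : Continuous fun p : ℝ × E2' => consMap p.1 p.2 := by
  unfold consMap
  refine (PiLp.continuous_toLp 2 (fun _ : Fin 3 => ℝ)).comp ?_
  refine continuous_pi fun i => ?_
  refine Fin.cases ?_ ?_ i
  · simpa using continuous_fst
  · intro j
    simpa [Function.comp_def] using (continuous_apply j).comp
      ((PiLp.continuous_ofLp 2 (fun _ : Fin 2 => ℝ)).comp continuous_snd)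

lemma norm_le_norm_consMap (c : ℝ) (v : E2') : ‖v‖ ≤ ‖consMap c v‖ := by
  rw [EuclideanSpace.norm_eq, EuclideanSpace.norm_eq]
  refine Real.sqrt_le_sqrt ?_
  rw [Fin.sum_univ_succ]
  simp only [consMap_apply_zero, consMap_apply_succ]
  exact le_add_of_nonneg_left (by positivity)

lemma mem_range_consMap {c : ℝ} {z : E3'} (hz : z 0 = c) : z ∈ Set.range (consMap c) := by
  refine ⟨(WithLp.equiv 2 (Fin 2 → ℝ)).symm (fun i => z i.succ), ?_⟩
  refine (WithLp.equiv 2 (Fin 3 → ℝ)).injective ?_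
  funext i
  induction i using Fin.cases with
  | zero => simp [consMap, hz]
  | succ j => simp [consMap]

lemma muH_pi2 : (μH[2] : Measure (Fin 2 → ℝ)) = volume := by
  have := MeasureTheory.hausdorffMeasure_pi_real (ι := Fin 2)
  simpa using this

lemma vol_image_le_muH (s : Set E2') :
    volume ((WithLp.equiv 2 (Fin 2 → ℝ)) '' s) ≤ μH[2] s := by
  have h := (PiLp.lipschitzWith_ofLp 2 (fun _ : Fin 2 => ℝ)).hausdorffMeasure_image_le
    (by norm_num : (0:ℝ) ≤ 2) s
  simpa [muH_pi2] using h

lemma exists_muH_le : ∃ C : ℝ≥0∞, C ≠ ∞ ∧ ∀ s : Set E2',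
    μH[2] s ≤ C * volume ((WithLp.equiv 2 (Fin 2 → ℝ)) '' s) := by
  set K := ((Fintype.card (Fin 2) : ℝ≥0) ^ (1 / (2:ℝ≥0∞)).toReal) with hK
  refine ⟨(K:ℝ≥0∞) ^ (2:ℝ),
    ENNReal.rpow_ne_top_of_nonneg (by norm_num) ENNReal.coe_ne_top, fun s => ?_⟩
  have hL : LipschitzWith K (WithLp.equiv 2 (Fin 2 → ℝ)).symm :=
    (PiLp.antilipschitzWith_ofLp 2 (fun _ : Fin 2 => ℝ)).to_rightInverse
      (fun y => (WithLp.equiv 2 _).apply_symm_apply y)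
  have h := hL.hausdorffMeasure_image_le (by norm_num : (0:ℝ) ≤ 2)
    ((WithLp.equiv 2 (Fin 2 → ℝ)) '' s)
  rw [Equiv.symm_image_image] at h
  simpa [muH_pi2] using h

lemma muH_pos_of_isOpen {U : Set E2'} (hU : IsOpen U) (hne : U.Nonempty) : 0 < μH[2] U := by
  refine lt_of_lt_of_le ?_ (vol_image_le_muH U)
  have ho : IsOpen ((WithLp.equiv 2 (Fin 2 → ℝ)) '' U) := by
    rw [Equiv.image_eq_preimage_symm]
    exact (PiLp.continuous_toLp 2 (fun _ : Fin 2 => ℝ)).isOpen_preimage _ hU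
  exact ho.measure_pos volume (hne.image _)

lemma muH_lt_top_of_bounded {s : Set E2'} {R : ℝ} (hs : s ⊆ Metric.closedBall 0 R) :
    μH[2] s < ∞ := by
  obtain ⟨C, hC, hle⟩ := exists_muH_le
  calc μH[2] s ≤ C * volume ((WithLp.equiv 2 (Fin 2 → ℝ)) '' s) := hle s
  _ ≤ C * volume (Metric.closedBall (0 : Fin 2 → ℝ) R) := by
      refine mul_le_mul_right (measure_mono ?_) C
      rintro _ ⟨v, hv, rfl⟩
      have h1 := hs hv
      rw [Metric.mem_closedBall] at h1 ⊢
      have h2 := (PiLp.lipschitzWith_ofLp 2 (fun _ : Fin 2 => ℝ)).dist_le_mul v 0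
      simpa [WithLp.ofLp_zero] using h2.trans (by simpa using h1)
  _ < ∞ := ENNReal.mul_lt_top hC.lt_top ((isCompact_closedBall _ _).measure_lt_top)

instance : SigmaFinite (μH[2] : Measure E2') := by
  refine ⟨⟨⟨fun n => Metric.closedBall 0 n, fun _ => trivial,
    fun n => muH_lt_top_of_bounded (subset_refl _), ?_⟩⟩⟩
  exact Metric.iUnion_closedBall_nat 0

end Stmt16Aux

open Stmt16Aux

theorem stmt_16 (D Dj : Set E3) (hDbdd : Bornology.IsBounded D)
    (hsub : Dj ⊆ D) (hDjopen : IsOpen Dj) (hDjconn : IsConnected Dj)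
    (tmin tmax : ℝ) (htmin : 0 ≤ tmin) (ht : tmin < tmax)
    (xhat : E3) (hx : ‖xhat‖ = 1)
    (c₀ : ℝ) (hc₀ : 0 < c₀)
    (S : E3 → ℝ → ℝ)
    (hSmeas : Measurable (fun p : E3 × ℝ => S p.1 p.2))
    (hSbdd : ∃ M : ℝ, ∀ y ∈ D, ∀ t ∈ Set.Icc tmin tmax, S y t ≤ M)
    -- `S ≥ c₀ > 0` on `D̄ × [t_min, t_max]`:
    (hSpos : ∀ y ∈ closure D, ∀ t ∈ Set.Icc tmin tmax, c₀ ≤ S y t)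
    (g : ℝ → ℝ)
    -- `g_j(ξ) = ∫_{t_min}^{t_max} ∫_{{y ∈ D_j : x̂·y = ξ+t}} S(y,t) ds(y) dt`,
    -- with `ds` the 2-dimensional (Hausdorff) surface measure:
    (hg : ∀ ξ : ℝ, g ξ = ∫ t in Set.Ioo tmin tmax,
      ∫ y in {y ∈ Dj | ⟪xhat, y⟫ = ξ + t}, S y t ∂(μH[2])) :
    (∀ ξ ∈ Set.Ioo (sInf ((fun y => ⟪xhat, y⟫) '' Dj) - tmax)
        (sSup ((fun y => ⟪xhat, y⟫) '' Dj) - tmin), 0 < g ξ) ∧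
    (∀ ξ : ℝ, ξ ∉ Set.Icc (sInf ((fun y => ⟪xhat, y⟫) '' Dj) - tmax)
        (sSup ((fun y => ⟪xhat, y⟫) '' Dj) - tmin) → g ξ = 0) := by
  classical
  obtain ⟨y₀, hy₀⟩ := hDjconn.nonempty
  obtain ⟨R, hR⟩ := hDbdd.subset_closedBall 0
  set I := (fun y => ⟪xhat, y⟫) '' Dj with hIdef
  have habs : ∀ y ∈ Dj, |⟪xhat, y⟫| ≤ R := by
    intro y hy
    have h1 : ‖y‖ ≤ R := by
      have := hR (hsub hy)
      rwa [Metric.mem_closedBall, dist_zero_right] at this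
    calc |⟪xhat, y⟫| ≤ ‖xhat‖ * ‖y‖ := abs_real_inner_le_norm xhat y
    _ = ‖y‖ := by rw [hx, one_mul]
    _ ≤ R := h1
  have hBddA : BddAbove I := by
    refine ⟨R, ?_⟩
    rintro a ⟨y, hy, rfl⟩
    exact le_trans (le_abs_self _) (habs y hy)
  have hBddB : BddBelow I := by
    refine ⟨-R, ?_⟩
    rintro a ⟨y, hy, rfl⟩
    exact neg_le_of_abs_le (habs y hy)
  have hIne : I.Nonempty := ⟨_, ⟨y₀, hy₀, rfl⟩⟩
  have hmemle : ∀ y ∈ Dj, ⟪xhat, y⟫ ≤ sSup I := fun y hy => le_csSup hBddA ⟨y, hy, rfl⟩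
  have hmemge : ∀ y ∈ Dj, sInf I ≤ ⟪xhat, y⟫ := fun y hy => csInf_le hBddB ⟨y, hy, rfl⟩
  -- vanishing part
  have hvan : ∀ ξ : ℝ, ξ ∉ Set.Icc (sInf I - tmax) (sSup I - tmin) → g ξ = 0 := by
    intro ξ hξ
    have hcases : ξ < sInf I - tmax ∨ sSup I - tmin < ξ := by
      by_contra hcon
      push_neg at hcon
      exact hξ ⟨hcon.1, hcon.2⟩
    rw [hg ξ]
    refine setIntegral_eq_zero_of_forall_eq_zero fun t htIoo => ?_
    have hempty : {y ∈ Dj | ⟪xhat, y⟫ = ξ + t} = (∅ : Set E3) := by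
      ext y
      simp only [Set.mem_setOf_eq, Set.mem_empty_iff_false, iff_false, not_and]
      intro hy hyc
      rcases hcases with h | h
      · have h2 := hmemge y hy
        rw [hyc] at h2
        have := htIoo.2
        linarith
      · have h2 := hmemle y hy
        rw [hyc] at h2
        have := htIoo.1
        linarith
    rw [hempty, setIntegral_empty]
  -- orthonormal basis adapted to xhat
  have hON : Orthonormal ℝ (Set.restrict {(0 : Fin 3)} (fun _ : Fin 3 => xhat)) := by
    rw [orthonormal_iff_ite]
    intro i j
    have hij : i = j := Subtype.ext (by
      have hi := i.2
      have hj := j.2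
      simp only [Set.mem_singleton_iff] at hi hj
      rw [hi, hj])
    subst hij
    have h1 : ⟪xhat, xhat⟫ = 1 := by
      rw [real_inner_self_eq_norm_mul_norm, hx]; norm_num
    simp only [Set.restrict_apply, h1]
    simp [Set.restrict, hx]
  obtain ⟨b, hb⟩ := hON.exists_orthonormalBasis_extension_of_card_eq
    (by simp [finrank_euclideanSpace])
  have hb0 : b 0 = xhat := hb 0 rfl
  set Φ := b.repr with hΦdef
  have hΦ0 : ∀ y : E3, Φ y 0 = ⟪xhat, y⟫ := by
    intro y
    rw [hΦdef, b.repr_apply_apply, hb0]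
  set ι : ℝ → E2' → E3 := fun c v => Φ.symm (consMap c v) with hιdef
  have ιiso : ∀ c, Isometry (ι c) :=
    fun c => Φ.symm.isometry.comp (consMap_isometry c)
  have ιemb : ∀ c, MeasurableEmbedding (ι c) :=
    fun c => (ιiso c).isClosedEmbedding.measurableEmbedding
  have hι0 : ∀ c v, ⟪xhat, ι c v⟫ = c := by
    intro c v
    rw [← hΦ0]
    show Φ (Φ.symm (consMap c v)) 0 = c
    rw [Φ.apply_symm_apply]
    exact consMap_apply_zero c v
  have hrange : ∀ c, Set.range (ι c) = {y : E3 | ⟪xhat, y⟫ = c} := by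
    intro c
    ext y
    constructor
    · rintro ⟨v, rfl⟩
      exact hι0 c v
    · intro hy
      have h0 : (Φ y) 0 = c := by rw [hΦ0]; exact hy
      obtain ⟨v, hv⟩ := mem_range_consMap h0
      exact ⟨v, by rw [hιdef]; simp only []; rw [hv, Φ.symm_apply_apply]⟩
  set ν : Measure E2' := μH[2] with hνdef
  haveI : SigmaFinite ν := by rw [hνdef]; infer_instance
  have hmap : ∀ c, Measure.map (ι c) ν = (μH[2] : Measure E3).restrict (Set.range (ι c)) := by
    intro c
    ext s hs
    rw [(ιemb c).map_apply, Measure.restrict_apply hs,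
      (ιiso c).hausdorffMeasure_preimage (Or.inl (by norm_num)) s]
  have hDjmeas : MeasurableSet Dj := hDjopen.measurableSet
  have hslice : ∀ (c t : ℝ),
      (∫ y in {y ∈ Dj | ⟪xhat, y⟫ = c}, S y t ∂(μH[2] : Measure E3))
        = ∫ v in (ι c) ⁻¹' Dj, S (ι c v) t ∂ν := by
    intro c t
    have h1 : {y ∈ Dj | ⟪xhat, y⟫ = c} = Dj ∩ Set.range (ι c) := by
      rw [hrange c]
      ext y
      simp [Set.mem_sep_iff]
    rw [h1, ← Measure.restrict_restrict hDjmeas, ← hmap c, (ιemb c).setIntegral_map]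
  -- positivity part
  obtain ⟨M, hM⟩ := hSbdd
  have hc₀M : c₀ ≤ M :=
    le_trans (hSpos y₀ (subset_closure (hsub hy₀)) tmin ⟨le_refl _, ht.le⟩)
      (hM y₀ (hsub hy₀) tmin ⟨le_refl _, ht.le⟩)
  have hIlt : sInf I < sSup I := by
    obtain ⟨r, hr, hball⟩ := Metric.isOpen_iff.1 hDjopen y₀ hy₀
    have hmem : ∀ s : ℝ, |s| < r → y₀ + s • xhat ∈ Dj := by
      intro s hs
      apply hball
      rw [Metric.mem_ball, dist_eq_norm]
      simp only [add_sub_cancel_left]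
      rw [norm_smul, hx, mul_one, Real.norm_eq_abs]
      exact hs
    have hinner : ∀ s : ℝ, ⟪xhat, y₀ + s • xhat⟫ = ⟪xhat, y₀⟫ + s := by
      intro s
      rw [inner_add_right, real_inner_smul_right, real_inner_self_eq_norm_mul_norm, hx]
      ring
    have h1 : ⟪xhat, y₀⟫ + r/2 ≤ sSup I := by
      have := hmemle _ (hmem (r/2) (by rw [abs_of_pos (by linarith)]; linarith))
      rwa [hinner] at this
    have h2 : sInf I ≤ ⟪xhat, y₀⟫ + (-(r/2)) := by
      have := hmemge _ (hmem (-(r/2)) (by rw [abs_neg, abs_of_pos (by linarith)]; linarith))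
      rwa [hinner] at this
    linarith
  have hpos : ∀ ξ ∈ Set.Ioo (sInf I - tmax) (sSup I - tmin), 0 < g ξ := by
    intro ξ hξ
    set A : ℝ → Set E2' := fun t => (ι (ξ + t)) ⁻¹' Dj with hAdef
    set F : ℝ → ℝ := fun t => ∫ v in A t, S (ι (ξ + t) v) t ∂ν with hFdef
    have hAopen : ∀ t, IsOpen (A t) := fun t => hDjopen.preimage (ιiso (ξ + t)).continuous
    have hAsub : ∀ t, A t ⊆ Metric.closedBall 0 R := by
      intro t v hv
      rw [Metric.mem_closedBall, dist_zero_right]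
      have h1 : ι (ξ + t) v ∈ Metric.closedBall (0 : E3) R := hR (hsub hv)
      rw [Metric.mem_closedBall, dist_zero_right] at h1
      calc ‖v‖ ≤ ‖consMap (ξ + t) v‖ := norm_le_norm_consMap _ _
      _ = ‖ι (ξ + t) v‖ := (Φ.symm.norm_map _).symm
      _ ≤ R := h1
    have hνA : ∀ t, ν (A t) < ∞ := fun t => muH_lt_top_of_bounded (hAsub t)
    have hνB : ν (Metric.closedBall 0 R) < ∞ := muH_lt_top_of_bounded (subset_refl _)
    have hmeasv : ∀ t, Measurable fun v => S (ι (ξ + t) v) t := fun t =>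
      hSmeas.comp (((ιiso (ξ + t)).continuous.measurable).prodMk measurable_const)
    have hSle : ∀ t ∈ Set.Icc tmin tmax, ∀ v ∈ A t,
        c₀ ≤ S (ι (ξ + t) v) t ∧ S (ι (ξ + t) v) t ≤ M := by
      intro t htm v hv
      have hyD : ι (ξ + t) v ∈ D := hsub hv
      exact ⟨hSpos _ (subset_closure hyD) t htm, hM _ hyD t htm⟩
    have hint : ∀ t ∈ Set.Icc tmin tmax,
        IntegrableOn (fun v => S (ι (ξ + t) v) t) (A t) ν := by
      intro t htm
      refine Measure.integrableOn_of_bounded (M := M) (hνA t).ne ((hmeasv t).aestronglyMeasurable) ?_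
      refine (ae_restrict_iff' (hAopen t).measurableSet).2 (Filter.Eventually.of_forall ?_)
      intro v hv
      have h := hSle t htm v hv
      rw [Real.norm_eq_abs, abs_le]
      exact ⟨by linarith, h.2⟩
    have hg1 : Continuous fun p : ℝ × E2' => ((ξ + p.1, p.2) : ℝ × E2') :=
      (continuous_const.add continuous_fst).prodMk continuous_snd
    have hg2 : Continuous fun p : ℝ × E2' => consMap (ξ + p.1) p.2 := consMap_cont.comp hg1
    have hcontι : Continuous fun p : ℝ × E2' => ι (ξ + p.1) p.2 := Φ.symm.continuous.comp hg2
    have hFmeas : StronglyMeasurable F := by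
      have hHmeas : StronglyMeasurable fun p : ℝ × E2' =>
          Set.indicator {p : ℝ × E2' | ι (ξ + p.1) p.2 ∈ Dj}
            (fun p => S (ι (ξ + p.1) p.2) p.1) p := by
        apply Measurable.stronglyMeasurable
        refine Measurable.indicator ?_ ?_
        · exact hSmeas.comp ((hcontι.measurable).prodMk measurable_fst)
        · exact (hDjopen.preimage hcontι).measurableSet
      have hFH : F = fun t => ∫ v, Set.indicator {p : ℝ × E2' | ι (ξ + p.1) p.2 ∈ Dj}
          (fun p => S (ι (ξ + p.1) p.2) p.1) (t, v) ∂ν := by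
        funext t
        rw [hFdef]
        simp only []
        rw [← integral_indicator (hAopen t).measurableSet]
        congr 1
      rw [hFH]
      exact hHmeas.integral_prod_right'
    have hFnonneg : ∀ t ∈ Set.Icc tmin tmax, 0 ≤ F t := by
      intro t htm
      exact setIntegral_nonneg (hAopen t).measurableSet fun v hv =>
        le_trans hc₀.le (hSle t htm v hv).1
    have hFle : ∀ t ∈ Set.Icc tmin tmax, ‖F t‖ ≤ M * (ν (Metric.closedBall 0 R)).toReal := by
      intro t htm
      have hb1 : ‖F t‖ ≤ M * (ν (A t)).toReal := by
        refine norm_setIntegral_le_of_norm_le_const (hνA t) ?_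
        intro v hv
        have h := hSle t htm v hv
        rw [Real.norm_eq_abs, abs_of_pos (lt_of_lt_of_le hc₀ h.1)]
        exact h.2
      refine hb1.trans ?_
      refine mul_le_mul_of_nonneg_left ?_ (by linarith)
      exact ENNReal.toReal_mono hνB.ne (measure_mono (hAsub t))
    have hFint : IntegrableOn F (Set.Ioo tmin tmax) volume := by
      refine Measure.integrableOn_of_bounded (M := M * (ν (Metric.closedBall 0 R)).toReal) ?_ hFmeas.aestronglyMeasurable ?_
      · rw [Real.volume_Ioo]; exact ENNReal.ofReal_ne_top
      · refine (ae_restrict_iff' measurableSet_Ioo).2 (Filter.Eventually.of_forall ?_)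
        intro t htIoo
        exact hFle t ⟨htIoo.1.le, htIoo.2.le⟩
    have hgF : g ξ = ∫ t in Set.Ioo tmin tmax, F t := by
      rw [hg ξ]
      refine setIntegral_congr_fun measurableSet_Ioo fun t _ => ?_
      exact hslice (ξ + t) t
    rw [hgF]
    have hnn : (0 : ℝ → ℝ) ≤ᵐ[volume.restrict (Set.Ioo tmin tmax)] F := by
      refine (ae_restrict_iff' measurableSet_Ioo).2 (Filter.Eventually.of_forall ?_)
      intro t htIoo
      exact hFnonneg t ⟨htIoo.1.le, htIoo.2.le⟩
    rw [setIntegral_pos_iff_support_of_nonneg_ae hnn hFint]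
    set a' := max tmin (sInf I - ξ) with ha'def
    set b' := min tmax (sSup I - ξ) with hb'def
    have ha'b' : a' < b' := by
      apply max_lt
      · apply lt_min ht
        have := hξ.2
        linarith
      · apply lt_min
        · have := hξ.1
          linarith
        · linarith
    have hsupp : Set.Ioo a' b' ⊆ Function.support F ∩ Set.Ioo tmin tmax := by
      intro t htab
      have htIoo : t ∈ Set.Ioo tmin tmax :=
        ⟨lt_of_le_of_lt (le_max_left _ _) htab.1, lt_of_lt_of_le htab.2 (min_le_left _ _)⟩
      refine ⟨?_, htIoo⟩
      have hc1 : sInf I < ξ + t := by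
        have := lt_of_le_of_lt (le_max_right _ _) htab.1
        linarith
      have hc2 : ξ + t < sSup I := by
        have := lt_of_lt_of_le htab.2 (min_le_right _ _)
        linarith
      obtain ⟨y, hyDj, hyc⟩ : ∃ y ∈ Dj, ⟪xhat, y⟫ = ξ + t := by
        obtain ⟨p, hpI, hp⟩ := exists_lt_of_csInf_lt hIne hc1
        obtain ⟨q, hqI, hq⟩ := exists_lt_of_lt_csSup hIne hc2
        have hconn : IsPreconnected I :=
          (hDjconn.image _ ((Continuous.inner continuous_const continuous_id).continuousOn)).isPreconnected
        have hmemI : ξ + t ∈ I := hconn.ordConnected.out hpI hqI ⟨hp.le, hq.le⟩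
        obtain ⟨y, hy, hy2⟩ := hmemI
        exact ⟨y, hy, hy2⟩
      have hAne : (A t).Nonempty := by
        have h0 : (Φ y) 0 = ξ + t := by rw [hΦ0]; exact hyc
        obtain ⟨v, hv⟩ := mem_range_consMap h0
        refine ⟨v, ?_⟩
        have : ι (ξ + t) v = y := by
          rw [hιdef]
          simp only []
          rw [hv, Φ.symm_apply_apply]
        rw [hAdef]
        simp only [Set.mem_preimage, this]
        exact hyDj
      have hν0 : 0 < ν (A t) := muH_pos_of_isOpen (hAopen t) hAne
      have htm : t ∈ Set.Icc tmin tmax := ⟨htIoo.1.le, htIoo.2.le⟩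
      have hF0 : 0 < F t := by
        have hconst : IntegrableOn (fun _ : E2' => c₀) (A t) ν :=
          integrableOn_const (hνA t).ne
        have hmono := setIntegral_mono_on hconst (hint t htm)
          (hAopen t).measurableSet (fun v hv => (hSle t htm v hv).1)
        rw [setIntegral_const] at hmono
        have hpos2 : 0 < (ν (A t)).toReal * c₀ :=
          mul_pos (ENNReal.toReal_pos hν0.ne' (hνA t).ne) hc₀
        calc (0:ℝ) < (ν (A t)).toReal • c₀ := by simpa [smul_eq_mul] using hpos2
        _ ≤ F t := hmono
      exact fun h0 => hF0.ne' h0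
    calc (0:ℝ≥0∞) < volume (Set.Ioo a' b') := by
          rw [Real.volume_Ioo]
          exact ENNReal.ofReal_pos.2 (by linarith)
    _ ≤ volume (Function.support F ∩ Set.Ioo tmin tmax) := measure_mono hsupp
  exact ⟨hpos, hvan⟩

end
end
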